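/- arXiv:0907.0299 — 4 statements merged into one kernel-verified Lean document; each statement's English description precedes it below -/
import Mathlib

section
/- Let c ∈ ℝ and λ ∈ ℂ. For u ∈ ℝ with u < 0 define the complex-valued function Q(u) = (1+e^{u})^{−c−iλ} (1−e^{u})^{c−iλ} e^{iλ u} (using the real logarithm of the positive bases). Then Q satisfies the ODE (−(1/2) Q'' + g̃_1/(e^{−u/2} − e^{u/2})² · Q + g̃_2/(e^{−u} − e^{u})² · Q) = (λ²/2) Q on (−∞,0), where g̃_1 = −(2iλ+1)c and g̃_2 = 2(iλ + c) + 2(iλ + c)². -/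
open Complex

private noncomputable def Qfun (c : ℝ) (lam : ℂ) : ℝ → ℂ := fun u =>
  Complex.exp ((-(c : ℂ) - Complex.I * lam) * (Real.log (1 + Real.exp u) : ℂ)) *
  Complex.exp (((c : ℂ) - Complex.I * lam) * (Real.log (1 - Real.exp u) : ℂ)) *
  Complex.exp (Complex.I * lam * (u : ℂ))

private noncomputable def Lfun (c : ℝ) (lam : ℂ) : ℝ → ℂ := fun u =>
  (-(c : ℂ) - Complex.I * lam) * ((Real.exp u : ℂ) / (1 + (Real.exp u : ℂ)))
    - ((c : ℂ) - Complex.I * lam) * ((Real.exp u : ℂ) / (1 - (Real.exp u : ℂ)))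
    + Complex.I * lam

private lemma exp_lt_one {v : ℝ} (hv : v < 0) : Real.exp v < 1 := by
  simpa using Real.exp_lt_one_iff.mpr hv

private lemma hasDerivAt_Qfun (c : ℝ) (lam : ℂ) {v : ℝ} (hv : v < 0) :
    HasDerivAt (Qfun c lam) (Qfun c lam v * Lfun c lam v) v := by
  have hx1 : (0:ℝ) < 1 + Real.exp v := by positivity
  have hx2 : (0:ℝ) < 1 - Real.exp v := by linarith [exp_lt_one hv]
  have hxe : HasDerivAt (fun u : ℝ => Real.exp u) (Real.exp v) v := Real.hasDerivAt_exp v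
  -- log (1 + e^u)
  have hl1 : HasDerivAt (fun u : ℝ => Real.log (1 + Real.exp u))
      (Real.exp v / (1 + Real.exp v)) v := by
    simpa using (hxe.const_add 1).log (ne_of_gt hx1)
  have hl2 : HasDerivAt (fun u : ℝ => Real.log (1 - Real.exp u))
      (-Real.exp v / (1 - Real.exp v)) v := by
    simpa using (hxe.const_sub 1).log (ne_of_gt hx2)
  have h1 : HasDerivAt (fun u : ℝ =>
      Complex.exp ((-(c : ℂ) - Complex.I * lam) * (Real.log (1 + Real.exp u) : ℂ)))
      (Complex.exp ((-(c : ℂ) - Complex.I * lam) * (Real.log (1 + Real.exp v) : ℂ)) *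
        ((-(c : ℂ) - Complex.I * lam) * ((Real.exp v / (1 + Real.exp v) : ℝ) : ℂ))) v := by
    exact ((hl1.ofReal_comp).const_mul (-(c : ℂ) - Complex.I * lam)).cexp
  have h2 : HasDerivAt (fun u : ℝ =>
      Complex.exp (((c : ℂ) - Complex.I * lam) * (Real.log (1 - Real.exp u) : ℂ)))
      (Complex.exp (((c : ℂ) - Complex.I * lam) * (Real.log (1 - Real.exp v) : ℂ)) *
        (((c : ℂ) - Complex.I * lam) * ((-Real.exp v / (1 - Real.exp v) : ℝ) : ℂ))) v := by
    exact ((hl2.ofReal_comp).const_mul ((c : ℂ) - Complex.I * lam)).cexp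
  have h3 : HasDerivAt (fun u : ℝ => Complex.exp (Complex.I * lam * (u : ℂ)))
      (Complex.exp (Complex.I * lam * (v : ℂ)) * (Complex.I * lam)) v := by
    have hid : HasDerivAt (fun u : ℝ => (u : ℂ)) ((1 : ℝ) : ℂ) v :=
      (hasDerivAt_id v).ofReal_comp
    have := (hid.const_mul (Complex.I * lam)).cexp
    simpa using this
  have h := (h1.mul h2).mul h3
  have hc1 : ((1 + Real.exp v : ℝ) : ℂ) ≠ 0 := ofReal_ne_zero.mpr (ne_of_gt hx1)
  have hc2 : ((1 - Real.exp v : ℝ) : ℂ) ≠ 0 := ofReal_ne_zero.mpr (ne_of_gt hx2)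
  have hc1' : (1 + (Real.exp v : ℂ)) ≠ 0 := by
    rw [← Complex.ofReal_one, ← Complex.ofReal_add]; exact hc1
  have hc2' : (1 - (Real.exp v : ℂ)) ≠ 0 := by
    rw [← Complex.ofReal_one, ← Complex.ofReal_sub]; exact hc2
  refine h.congr_deriv ?_
  symm
  unfold Qfun Lfun
  simp only [Complex.ofReal_div, Complex.ofReal_neg, Pi.mul_apply, Complex.ofReal_add,
    Complex.ofReal_sub, Complex.ofReal_one]
  field_simp
  ring

private lemma hasDerivAt_Lfun (c : ℝ) (lam : ℂ) {v : ℝ} (hv : v < 0) :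
    HasDerivAt (Lfun c lam)
      ((-(c : ℂ) - Complex.I * lam) * ((Real.exp v : ℂ) / (1 + (Real.exp v : ℂ)) ^ 2)
        - ((c : ℂ) - Complex.I * lam) * ((Real.exp v : ℂ) / (1 - (Real.exp v : ℂ)) ^ 2)) v := by
  have hx1 : (0:ℝ) < 1 + Real.exp v := by positivity
  have hx2 : (0:ℝ) < 1 - Real.exp v := by linarith [exp_lt_one hv]
  have hc1 : ((1 + Real.exp v : ℝ) : ℂ) ≠ 0 := ofReal_ne_zero.mpr (ne_of_gt hx1)
  have hc2 : ((1 - Real.exp v : ℝ) : ℂ) ≠ 0 := ofReal_ne_zero.mpr (ne_of_gt hx2)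
  have hc1' : (1 + (Real.exp v : ℂ)) ≠ 0 := by
    rw [← Complex.ofReal_one, ← Complex.ofReal_add]; exact hc1
  have hc2' : (1 - (Real.exp v : ℂ)) ≠ 0 := by
    rw [← Complex.ofReal_one, ← Complex.ofReal_sub]; exact hc2
  have hx : HasDerivAt (fun u : ℝ => (Real.exp u : ℂ)) ((Real.exp v : ℝ) : ℂ) v :=
    (Real.hasDerivAt_exp v).ofReal_comp
  have hd1 : HasDerivAt (fun u : ℝ => (Real.exp u : ℂ) / (1 + (Real.exp u : ℂ)))
      (((Real.exp v : ℂ) * (1 + (Real.exp v : ℂ)) - (Real.exp v : ℂ) * (Real.exp v : ℂ))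
        / (1 + (Real.exp v : ℂ)) ^ 2) v :=
    hx.div (hx.const_add 1) hc1'
  have hd2 : HasDerivAt (fun u : ℝ => (Real.exp u : ℂ) / (1 - (Real.exp u : ℂ)))
      (((Real.exp v : ℂ) * (1 - (Real.exp v : ℂ)) - (Real.exp v : ℂ) * (-(Real.exp v : ℂ)))
        / (1 - (Real.exp v : ℂ)) ^ 2) v :=
    hx.div (hx.const_sub 1) hc2'
  have h := ((hd1.const_mul (-(c : ℂ) - Complex.I * lam)).sub
      (hd2.const_mul ((c : ℂ) - Complex.I * lam))).add_const (Complex.I * lam)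
  refine h.congr_deriv ?_
  symm
  field_simp
  ring


set_option maxHeartbeats 4000000 in
private lemma key_identity (m cc x : ℂ) (hx : x ≠ 0) (h1 : (1:ℂ) + x ≠ 0)
    (h2 : (1:ℂ) - x ≠ 0) (h3 : (1:ℂ) - x * x ≠ 0) :
    -(1 / 2 : ℂ) *
        (((-cc - m) * (x / (1 + x)) - (cc - m) * (x / (1 - x)) + m) *
          ((-cc - m) * (x / (1 + x)) - (cc - m) * (x / (1 - x)) + m)
        + ((-cc - m) * (x / (1 + x) ^ 2) - (cc - m) * (x / (1 - x) ^ 2)))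
      + (-(2 * m + 1) * cc) / ((1 - x) ^ 2 / x)
      + (2 * (m + cc) + 2 * (m + cc) ^ 2) / ((1 - x * x) ^ 2 / (x * x))
    = -(m ^ 2) / 2 := by
  have hz : ((1:ℂ) - x)^2 ≠ 0 := pow_ne_zero _ h2
  have hK : ((1:ℂ) + x)^2 * (1 - x)^2 ≠ 0 := mul_ne_zero (pow_ne_zero _ h1) hz
  have hL : (-cc - m) * (x / (1 + x)) - (cc - m) * (x / (1 - x)) + m
      = ((-cc - m) * (x * (1 - x)) - (cc - m) * (x * (1 + x)) + m * ((1 + x) * (1 - x)))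
        / ((1 + x) * (1 - x)) := by
    field_simp
  have hL' : (-cc - m) * (x / (1 + x) ^ 2) - (cc - m) * (x / (1 - x) ^ 2)
      = ((-cc - m) * (x * (1 - x) ^ 2) - (cc - m) * (x * (1 + x) ^ 2))
        / ((1 + x) ^ 2 * (1 - x) ^ 2) := by
    field_simp
  have hg1 : (-(2 * m + 1) * cc) / ((1 - x) ^ 2 / x)
      = (-(2 * m + 1) * cc * x * (1 + x) ^ 2) / ((1 + x) ^ 2 * (1 - x) ^ 2) := by
    rw [div_div_eq_mul_div, div_eq_div_iff hz hK]; ring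
  have hg2 : (2 * (m + cc) + 2 * (m + cc) ^ 2) / ((1 - x * x) ^ 2 / (x * x))
      = ((2 * (m + cc) + 2 * (m + cc) ^ 2) * (x * x)) / ((1 + x) ^ 2 * (1 - x) ^ 2) := by
    rw [div_div_eq_mul_div, div_eq_div_iff (pow_ne_zero _ h3) hK]
    ring
  rw [hL, hL', hg1, hg2, div_mul_div_comm,
    show ((1 + x) * (1 - x)) * ((1 + x) * (1 - x)) = (1 + x) ^ 2 * (1 - x) ^ 2 by ring,
    ← add_div, ← mul_div_assoc, ← add_div, ← add_div,
    div_eq_div_iff hK (by norm_num : (2:ℂ) ≠ 0)]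
  ring

set_option maxHeartbeats 1000000 in
/-- The one-particle eigenvalue equation `(H^{I_1} − λ²/2) Q = 0` for the rank-one
Inozemtsev Toda Hamiltonian, with
`Q(u) = (1+e^u)^{−c−iλ}(1−e^u)^{c−iλ} e^{iλu}` (powers via the real logarithm of the
positive bases), `g̃_1 = −(2iλ+1)c`, `g̃_2 = 2(iλ+c)+2(iλ+c)²`. -/
theorem stmt_10 (c : ℝ) (lam : ℂ) :
    let Q : ℝ → ℂ := fun u =>
      Complex.exp ((-(c : ℂ) - Complex.I * lam) * (Real.log (1 + Real.exp u) : ℂ)) *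
      Complex.exp (((c : ℂ) - Complex.I * lam) * (Real.log (1 - Real.exp u) : ℂ)) *
      Complex.exp (Complex.I * lam * (u : ℂ))
    ∀ u : ℝ, u < 0 →
      -(1 / 2 : ℂ) * deriv (deriv Q) u
          + (-(2 * Complex.I * lam + 1) * (c : ℂ))
              / ((Real.exp (-u / 2) - Real.exp (u / 2) : ℝ) : ℂ) ^ 2 * Q u
          + (2 * (Complex.I * lam + (c : ℂ)) + 2 * (Complex.I * lam + (c : ℂ)) ^ 2)
              / ((Real.exp (-u) - Real.exp u : ℝ) : ℂ) ^ 2 * Q u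
        = (lam ^ 2 / 2) * Q u := by
  intro Q u hu
  have hQ : Q = Qfun c lam := rfl
  -- first derivative agrees with Q * L on Iio 0
  have hderiv : ∀ v ∈ Set.Iio (0:ℝ), deriv Q v = Qfun c lam v * Lfun c lam v := by
    intro v hv
    rw [hQ]
    exact (hasDerivAt_Qfun c lam hv).deriv
  have hmem : Set.Iio (0:ℝ) ∈ nhds u := Iio_mem_nhds hu
  have hev : deriv Q =ᶠ[nhds u] fun v => Qfun c lam v * Lfun c lam v :=
    Filter.eventuallyEq_of_mem hmem hderiv
  have hQL : HasDerivAt (fun v => Qfun c lam v * Lfun c lam v)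
      (Qfun c lam u * Lfun c lam u * Lfun c lam u +
        Qfun c lam u *
          ((-(c : ℂ) - Complex.I * lam) * ((Real.exp u : ℂ) / (1 + (Real.exp u : ℂ)) ^ 2)
            - ((c : ℂ) - Complex.I * lam) * ((Real.exp u : ℂ) / (1 - (Real.exp u : ℂ)) ^ 2))) u :=
    (hasDerivAt_Qfun c lam hu).mul (hasDerivAt_Lfun c lam hu)
  have h2 : deriv (deriv Q) u = Qfun c lam u * Lfun c lam u * Lfun c lam u +
      Qfun c lam u *
        ((-(c : ℂ) - Complex.I * lam) * ((Real.exp u : ℂ) / (1 + (Real.exp u : ℂ)) ^ 2)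
          - ((c : ℂ) - Complex.I * lam) * ((Real.exp u : ℂ) / (1 - (Real.exp u : ℂ)) ^ 2)) := by
    rw [hev.deriv_eq]
    exact hQL.deriv
  -- denominators
  have hexp : (0:ℝ) < Real.exp u := Real.exp_pos u
  have hx1 : (0:ℝ) < 1 + Real.exp u := by positivity
  have hx2 : (0:ℝ) < 1 - Real.exp u := by linarith [exp_lt_one hu]
  have e1 : Real.exp (-u/2) = (Real.exp (u/2))⁻¹ := by
    rw [show -u/2 = -(u/2) by ring, Real.exp_neg]
  have e2 : Real.exp u = Real.exp (u/2) * Real.exp (u/2) := by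
    rw [← Real.exp_add]; ring_nf
  have eneg : Real.exp (-u) = (Real.exp u)⁻¹ := Real.exp_neg u
  have hhalf : (0:ℝ) < Real.exp (u/2) := Real.exp_pos _
  have d1 : (Real.exp (-u/2) - Real.exp (u/2)) ^ 2 = (1 - Real.exp u)^2 / Real.exp u := by
    rw [e1, e2]
    rw [show (Real.exp (u/2))⁻¹ - Real.exp (u/2)
        = (1 - Real.exp (u/2) * Real.exp (u/2)) / Real.exp (u/2) by
      field_simp]
    rw [div_pow]; ring
  have d2 : (Real.exp (-u) - Real.exp u) ^ 2
      = (1 - Real.exp u * Real.exp u)^2 / (Real.exp u * Real.exp u) := by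
    rw [eneg]
    rw [show (Real.exp u)⁻¹ - Real.exp u
        = (1 - Real.exp u * Real.exp u) / Real.exp u by field_simp]
    rw [div_pow]; ring
  rw [hQ] at h2
  rw [hQ]
  simp only [← Complex.ofReal_pow]
  rw [h2, d1, d2]
  unfold Qfun Lfun
  set x : ℝ := Real.exp u with hxdef
  have hc0 : ((x : ℝ) : ℂ) ≠ 0 := ofReal_ne_zero.mpr (ne_of_gt hexp)
  have hc1 : ((1 + x : ℝ) : ℂ) ≠ 0 := ofReal_ne_zero.mpr (ne_of_gt hx1)
  have hc2 : ((1 - x : ℝ) : ℂ) ≠ 0 := ofReal_ne_zero.mpr (ne_of_gt hx2)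
  have hc1' : (1 + (x : ℂ)) ≠ 0 := by
    rw [← Complex.ofReal_one, ← Complex.ofReal_add]; exact hc1
  have hc2' : (1 - (x : ℂ)) ≠ 0 := by
    rw [← Complex.ofReal_one, ← Complex.ofReal_sub]; exact hc2
  have hx3 : (0:ℝ) < 1 - x * x := by nlinarith [exp_lt_one hu, hexp]
  have hc3 : (1 - (x : ℂ) * (x : ℂ)) ≠ 0 := by
    rw [← Complex.ofReal_mul, ← Complex.ofReal_one, ← Complex.ofReal_sub]
    exact ofReal_ne_zero.mpr (ne_of_gt hx3)
  have hlam : lam ^ 2 = -((Complex.I * lam) ^ 2) := by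
    rw [mul_pow, Complex.I_sq]; ring
  rw [hlam]
  simp only [Complex.ofReal_div, Complex.ofReal_pow, Complex.ofReal_sub,
    Complex.ofReal_one, Complex.ofReal_mul]
  have hkey := key_identity (Complex.I * lam) (c : ℂ) (x : ℂ) hc0 hc1' hc2' hc3
  linear_combination (Complex.exp ((-(c : ℂ) - Complex.I * lam) * (Real.log (1 + x) : ℂ)) *
      Complex.exp (((c : ℂ) - Complex.I * lam) * (Real.log (1 - x) : ℂ)) *
      Complex.exp (Complex.I * lam * (u : ℂ))) * hkey
end

section
/- Let n ≥ 2 and g_1,…,g_{n+2} ∈ ℝ. Define Q : ℝ^n × ℝ^{n+1} → ℝ by Q(x,z) = exp(−g_1 e^{z_1} − Σ_{i=1}^{n}(e^{x_i − z_i} + g_{i+1} e^{z_{i+1} − x_i}) − g_{n+2} e^{−z_{n+1} − x_n}). Then pointwise: (−(1/2)Σ_{i=1}^n ∂²/∂x_i² + g_1 e^{x_1} + Σ_{i=1}^{n−1} g_{i+1} e^{x_{i+1}−x_i} + 2 g_{n+1} g_{n+2} e^{−2x_n}) Q = (−(1/2)Σ_{i=1}^{n+1} ∂²/∂z_i² −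 (g_1/2) e^{z_1} + (g_1²/2) e^{2z_1} + Σ_{i=1}^{n} g_{i+1} e^{z_{i+1}−z_i} + g_{n+2} e^{−z_{n+1}−z_n}) Q. -/
/-- Second partial derivative of `f` along the `i`-th coordinate at the point `p`. -/
noncomputable def pd2 (f : (ℕ → ℝ) → ℝ) (i : ℕ) (p : ℕ → ℝ) : ℝ :=
  deriv (deriv (fun t => f (Function.update p i t))) (p i)

lemma tc_exp_sub (u v : ℝ) : Real.exp (u - v) = Real.exp (-v) * Real.exp u := by
  rw [← Real.exp_add]; ring_nf

lemma tc_hasDerivAt_inner (a b c t : ℝ) :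
    HasDerivAt (fun s : ℝ => c - a * Real.exp s - b * Real.exp (-s))
      (b * Real.exp (-t) - a * Real.exp t) t := by
  have h2 : HasDerivAt (fun s : ℝ => Real.exp (-s)) (-Real.exp (-t)) t := by
    simpa using ((hasDerivAt_id t).neg).exp
  have h := ((hasDerivAt_const t c).sub ((Real.hasDerivAt_exp t).const_mul a)).sub
    (h2.const_mul b)
  exact h.congr_deriv (by ring)

lemma tc_hasDerivAt_f (a b c t : ℝ) :
    HasDerivAt (fun s : ℝ => Real.exp (c - a * Real.exp s - b * Real.exp (-s)))
      ((b * Real.exp (-t) - a * Real.exp t)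
        * Real.exp (c - a * Real.exp t - b * Real.exp (-t))) t := by
  have := (tc_hasDerivAt_inner a b c t).exp
  convert this using 1; ring

lemma tc_deriv2 (a b c p : ℝ) :
    deriv (deriv (fun t : ℝ => Real.exp (c - a * Real.exp t - b * Real.exp (-t)))) p
      = ((b * Real.exp (-p) - a * Real.exp p) ^ 2 - a * Real.exp p - b * Real.exp (-p))
          * Real.exp (c - a * Real.exp p - b * Real.exp (-p)) := by
  have hd1 : deriv (fun t : ℝ => Real.exp (c - a * Real.exp t - b * Real.exp (-t)))
      = fun t => (b * Real.exp (-t) - a * Real.exp t)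
          * Real.exp (c - a * Real.exp t - b * Real.exp (-t)) :=
    funext fun t => (tc_hasDerivAt_f a b c t).deriv
  rw [hd1]
  have h2 : HasDerivAt (fun s : ℝ => Real.exp (-s)) (-Real.exp (-p)) p := by
    simpa using ((hasDerivAt_id p).neg).exp
  have hg : HasDerivAt (fun t : ℝ => b * Real.exp (-t) - a * Real.exp t)
      (b * -Real.exp (-p) - a * Real.exp p) p :=
    (h2.const_mul b).sub ((Real.hasDerivAt_exp p).const_mul a)
  exact ((hg.mul (tc_hasDerivAt_f a b c p)).deriv).trans (by ring)

lemma tc_pd2_eq (f : (ℕ → ℝ) → ℝ) (i : ℕ) (p : ℕ → ℝ) (a b c : ℝ)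
    (h : ∀ t, f (Function.update p i t) = Real.exp (c - a * Real.exp t - b * Real.exp (-t))) :
    pd2 f i p = ((b * Real.exp (-p i) - a * Real.exp (p i)) ^ 2
        - a * Real.exp (p i) - b * Real.exp (-p i)) * f p := by
  have h0 : f p = Real.exp (c - a * Real.exp (p i) - b * Real.exp (-p i)) := by
    have := h (p i); rwa [Function.update_eq_self] at this
  have h1 : (fun t => f (Function.update p i t))
      = fun t => Real.exp (c - a * Real.exp t - b * Real.exp (-t)) := funext h
  unfold pd2
  rw [h1, tc_deriv2, h0]

lemma tc_tele (T : ℕ → ℝ) (k : ℕ) :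
    ∑ i ∈ Finset.Icc 1 (k+1), (T i - T (i+1)) = T 1 - T (k+2) := by
  induction k with
  | zero => norm_num
  | succ k ih =>
    rw [Finset.sum_Icc_succ_top (by omega), ih]
    ring_nf

lemma tc_shift (f : ℕ → ℝ) (a b : ℕ) :
    ∑ i ∈ Finset.Icc (a+1) (b+1), f i = ∑ i ∈ Finset.Icc a b, f (i+1) := by
  rw [← Finset.map_add_right_Icc, Finset.sum_map]
  simp [addRightEmbedding_apply]

set_option maxHeartbeats 2000000 in
/-- The elementary kernel intertwining the twisted affine `A_{2n}^{(2)}` Toda chain with the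
affine non-reduced `BC'_{n+1}` Toda chain, pointwise. -/
theorem stmt_12 (n : ℕ) (hn : 2 ≤ n) (g : ℕ → ℝ) :
    let Q : (ℕ → ℝ) → (ℕ → ℝ) → ℝ := fun x z =>
      Real.exp (-(g 1 * Real.exp (z 1))
        - (∑ i ∈ Finset.Icc 1 n, (Real.exp (x i - z i) + g (i + 1) * Real.exp (z (i + 1) - x i)))
        - g (n + 2) * Real.exp (-z (n + 1) - x n))
    ∀ x z : ℕ → ℝ,
      -(1 / 2) * (∑ i ∈ Finset.Icc 1 n, pd2 (fun x' => Q x' z) i x)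
          + (g 1 * Real.exp (x 1)
              + (∑ i ∈ Finset.Icc 1 (n - 1), g (i + 1) * Real.exp (x (i + 1) - x i))
              + 2 * g (n + 1) * g (n + 2) * Real.exp (-2 * x n)) * Q x z
        = -(1 / 2) * (∑ i ∈ Finset.Icc 1 (n + 1), pd2 (fun z' => Q x z') i z)
          + (-(g 1 / 2) * Real.exp (z 1) + g 1 ^ 2 / 2 * Real.exp (2 * z 1)
              + (∑ i ∈ Finset.Icc 1 n, g (i + 1) * Real.exp (z (i + 1) - z i))
              + g (n + 2) * Real.exp (-z (n + 1) - z n)) * Q x z := by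
  intro Q x z
  obtain ⟨m, rfl⟩ : ∃ m, n = m + 2 := ⟨n - 2, by omega⟩
  have hQ : ∀ a b : ℕ → ℝ, Q a b = Real.exp (-(g 1 * Real.exp (b 1))
      - (∑ j ∈ Finset.Icc 1 (m+2), (Real.exp (a j - b j) + g (j+1) * Real.exp (b (j+1) - a j)))
      - g (m+4) * Real.exp (-b (m+3) - a (m+2))) := fun _ _ => rfl
  simp only [show m+2+1 = m+3 from rfl, show m+2+2 = m+4 from rfl,
    show m+2-1 = m+1 from rfl]
  -- x-side bulk
  have hx : ∀ i ∈ Finset.Icc 1 (m+1), pd2 (fun x' => Q x' z) i x =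
      ((g (i+1) * Real.exp (z (i+1)) * Real.exp (-x i)
          - Real.exp (-z i) * Real.exp (x i)) ^ 2
        - Real.exp (-z i) * Real.exp (x i)
        - g (i+1) * Real.exp (z (i+1)) * Real.exp (-x i)) * Q x z := by
    intro i hi
    rw [Finset.mem_Icc] at hi
    refine tc_pd2_eq _ _ _ (Real.exp (-z i)) (g (i+1) * Real.exp (z (i+1)))
      (-(g 1 * Real.exp (z 1))
        - (∑ j ∈ (Finset.Icc 1 (m+2)).erase i,
            (Real.exp (x j - z j) + g (j+1) * Real.exp (z (j+1) - x j)))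
        - g (m+4) * Real.exp (-z (m+3) - x (m+2))) ?_
    intro t
    rw [hQ]
    congr 1
    have hmem : i ∈ Finset.Icc 1 (m+2) := Finset.mem_Icc.mpr ⟨hi.1, by omega⟩
    rw [← Finset.add_sum_erase _ _ hmem]
    have hbulk : ∑ j ∈ (Finset.Icc 1 (m+2)).erase i,
        (Real.exp (Function.update x i t j - z j)
          + g (j+1) * Real.exp (z (j+1) - Function.update x i t j))
        = ∑ j ∈ (Finset.Icc 1 (m+2)).erase i,
            (Real.exp (x j - z j) + g (j+1) * Real.exp (z (j+1) - x j)) :=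
      Finset.sum_congr rfl fun j hj => by
        rw [Function.update_of_ne (Finset.ne_of_mem_erase hj)]
    rw [hbulk, Function.update_self,
      Function.update_of_ne (show (m+2 : ℕ) ≠ i by omega)]
    simp only [tc_exp_sub]
    ring
  -- x-side top
  have hxtop : pd2 (fun x' => Q x' z) (m+2) x =
      (((g (m+3) * Real.exp (z (m+3)) + g (m+4) * Real.exp (-z (m+3))) * Real.exp (-x (m+2))
          - Real.exp (-z (m+2)) * Real.exp (x (m+2))) ^ 2
        - Real.exp (-z (m+2)) * Real.exp (x (m+2))
        - (g (m+3) * Real.exp (z (m+3)) + g (m+4) * Real.exp (-z (m+3)))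
            * Real.exp (-x (m+2))) * Q x z := by
    refine tc_pd2_eq _ _ _ (Real.exp (-z (m+2)))
      (g (m+3) * Real.exp (z (m+3)) + g (m+4) * Real.exp (-z (m+3)))
      (-(g 1 * Real.exp (z 1))
        - (∑ j ∈ (Finset.Icc 1 (m+2)).erase (m+2),
            (Real.exp (x j - z j) + g (j+1) * Real.exp (z (j+1) - x j)))) ?_
    intro t
    rw [hQ]
    congr 1
    have hmem : (m+2 : ℕ) ∈ Finset.Icc 1 (m+2) := Finset.mem_Icc.mpr ⟨by omega, le_refl _⟩
    rw [← Finset.add_sum_erase _ _ hmem]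
    have hbulk : ∑ j ∈ (Finset.Icc 1 (m+2)).erase (m+2),
        (Real.exp (Function.update x (m+2) t j - z j)
          + g (j+1) * Real.exp (z (j+1) - Function.update x (m+2) t j))
        = ∑ j ∈ (Finset.Icc 1 (m+2)).erase (m+2),
            (Real.exp (x j - z j) + g (j+1) * Real.exp (z (j+1) - x j)) :=
      Finset.sum_congr rfl fun j hj => by
        rw [Function.update_of_ne (Finset.ne_of_mem_erase hj)]
    rw [hbulk]
    simp only [Function.update_self, show m+2+1 = m+3 from rfl]
    simp only [tc_exp_sub]
    ring
  -- z-side bottom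
  have hz1 : pd2 (fun z' => Q x z') 1 z =
      ((Real.exp (x 1) * Real.exp (-z 1) - g 1 * Real.exp (z 1)) ^ 2
        - g 1 * Real.exp (z 1) - Real.exp (x 1) * Real.exp (-z 1)) * Q x z := by
    refine tc_pd2_eq _ _ _ (g 1) (Real.exp (x 1))
      (-(g (1+1) * Real.exp (z (1+1) - x 1))
        - (∑ j ∈ (Finset.Icc 1 (m+2)).erase 1,
            (Real.exp (x j - z j) + g (j+1) * Real.exp (z (j+1) - x j)))
        - g (m+4) * Real.exp (-z (m+3) - x (m+2))) ?_
    intro t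
    rw [hQ]
    congr 1
    have hmem : (1 : ℕ) ∈ Finset.Icc 1 (m+2) := Finset.mem_Icc.mpr ⟨le_refl _, by omega⟩
    rw [← Finset.add_sum_erase _ _ hmem]
    have hbulk : ∑ j ∈ (Finset.Icc 1 (m+2)).erase 1,
        (Real.exp (x j - Function.update z 1 t j)
          + g (j+1) * Real.exp (Function.update z 1 t (j+1) - x j))
        = ∑ j ∈ (Finset.Icc 1 (m+2)).erase 1,
            (Real.exp (x j - z j) + g (j+1) * Real.exp (z (j+1) - x j)) :=
      Finset.sum_congr rfl fun j hj => by
        have h1 : j ≠ 1 := Finset.ne_of_mem_erase hj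
        have h3 := Finset.mem_of_mem_erase hj
        rw [Finset.mem_Icc] at h3
        rw [Function.update_of_ne h1, Function.update_of_ne (show j+1 ≠ 1 by omega)]
    rw [hbulk]
    simp only [Function.update_self,
      Function.update_of_ne (show (1+1 : ℕ) ≠ 1 by omega),
      Function.update_of_ne (show (m+3 : ℕ) ≠ 1 by omega)]
    simp only [tc_exp_sub]
    ring
  -- z-side bulk
  have hz : ∀ i ∈ Finset.Icc 1 (m+1), pd2 (fun z' => Q x z') (i+1) z =
      ((Real.exp (x (i+1)) * Real.exp (-z (i+1))
          - g (i+1) * Real.exp (-x i) * Real.exp (z (i+1))) ^ 2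
        - g (i+1) * Real.exp (-x i) * Real.exp (z (i+1))
        - Real.exp (x (i+1)) * Real.exp (-z (i+1))) * Q x z := by
    intro i hi
    rw [Finset.mem_Icc] at hi
    refine tc_pd2_eq _ _ _ (g (i+1) * Real.exp (-x i)) (Real.exp (x (i+1)))
      (-(g 1 * Real.exp (z 1))
        - (Real.exp (x i - z i) + g (i+1+1) * Real.exp (z (i+1+1) - x (i+1)))
        - (∑ j ∈ ((Finset.Icc 1 (m+2)).erase i).erase (i+1),
            (Real.exp (x j - z j) + g (j+1) * Real.exp (z (j+1) - x j)))
        - g (m+4) * Real.exp (-z (m+3) - x (m+2))) ?_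
    intro t
    rw [hQ]
    congr 1
    have hm1 : i ∈ Finset.Icc 1 (m+2) := Finset.mem_Icc.mpr ⟨hi.1, by omega⟩
    have hm2 : i + 1 ∈ (Finset.Icc 1 (m+2)).erase i :=
      Finset.mem_erase.mpr ⟨by omega, Finset.mem_Icc.mpr ⟨by omega, by omega⟩⟩
    rw [← Finset.add_sum_erase _ _ hm1, ← Finset.add_sum_erase _ _ hm2]
    have hbulk : ∑ j ∈ ((Finset.Icc 1 (m+2)).erase i).erase (i+1),
        (Real.exp (x j - Function.update z (i+1) t j)
          + g (j+1) * Real.exp (Function.update z (i+1) t (j+1) - x j))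
        = ∑ j ∈ ((Finset.Icc 1 (m+2)).erase i).erase (i+1),
            (Real.exp (x j - z j) + g (j+1) * Real.exp (z (j+1) - x j)) :=
      Finset.sum_congr rfl fun j hj => by
        have h1 : j ≠ i + 1 := Finset.ne_of_mem_erase hj
        have h2 : j ≠ i := Finset.ne_of_mem_erase (Finset.mem_of_mem_erase hj)
        rw [Function.update_of_ne h1, Function.update_of_ne (show j+1 ≠ i+1 by omega)]
    rw [hbulk]
    simp only [Function.update_self,
      Function.update_of_ne (show (1 : ℕ) ≠ i+1 by omega),
      Function.update_of_ne (show i ≠ i+1 by omega),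
      Function.update_of_ne (show i+1+1 ≠ i+1 by omega),
      Function.update_of_ne (show (m+3 : ℕ) ≠ i+1 by omega)]
    simp only [tc_exp_sub]
    ring
  -- z-side top
  have hztop : pd2 (fun z' => Q x z') (m+3) z =
      ((g (m+4) * Real.exp (-x (m+2)) * Real.exp (-z (m+3))
          - g (m+3) * Real.exp (-x (m+2)) * Real.exp (z (m+3))) ^ 2
        - g (m+3) * Real.exp (-x (m+2)) * Real.exp (z (m+3))
        - g (m+4) * Real.exp (-x (m+2)) * Real.exp (-z (m+3))) * Q x z := by
    refine tc_pd2_eq _ _ _ (g (m+3) * Real.exp (-x (m+2))) (g (m+4) * Real.exp (-x (m+2)))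
      (-(g 1 * Real.exp (z 1))
        - Real.exp (x (m+2) - z (m+2))
        - (∑ j ∈ (Finset.Icc 1 (m+2)).erase (m+2),
            (Real.exp (x j - z j) + g (j+1) * Real.exp (z (j+1) - x j)))) ?_
    intro t
    rw [hQ]
    congr 1
    have hmem : (m+2 : ℕ) ∈ Finset.Icc 1 (m+2) := Finset.mem_Icc.mpr ⟨by omega, le_refl _⟩
    rw [← Finset.add_sum_erase _ _ hmem]
    have hbulk : ∑ j ∈ (Finset.Icc 1 (m+2)).erase (m+2),
        (Real.exp (x j - Function.update z (m+3) t j)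
          + g (j+1) * Real.exp (Function.update z (m+3) t (j+1) - x j))
        = ∑ j ∈ (Finset.Icc 1 (m+2)).erase (m+2),
            (Real.exp (x j - z j) + g (j+1) * Real.exp (z (j+1) - x j)) :=
      Finset.sum_congr rfl fun j hj => by
        have h2 : j ≠ m+2 := Finset.ne_of_mem_erase hj
        have h1 : j ∈ Finset.Icc 1 (m+2) := Finset.mem_of_mem_erase hj
        rw [Finset.mem_Icc] at h1
        rw [Function.update_of_ne (show j ≠ m+3 by omega),
          Function.update_of_ne (show j+1 ≠ m+3 by omega)]
    rw [hbulk]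
    simp only [show m+2+1 = m+3 from rfl, Function.update_self,
      Function.update_of_ne (show (1 : ℕ) ≠ m+3 by omega),
      Function.update_of_ne (show (m+2 : ℕ) ≠ m+3 by omega)]
    simp only [tc_exp_sub]
    ring
  -- split the z-sum bottom
  have hsplit1 : ∑ i ∈ Finset.Icc 1 (m+2), pd2 (fun z' => Q x z') i z
      = pd2 (fun z' => Q x z') 1 z
        + ∑ i ∈ Finset.Icc 1 (m+1), pd2 (fun z' => Q x z') (i+1) z := by
    rw [← Finset.add_sum_erase _ _ (Finset.mem_Icc.mpr ⟨le_refl 1, by omega⟩),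
      Finset.Icc_erase_left]
    congr 1
    rw [← Finset.Icc_add_one_left_eq_Ioc]
    exact tc_shift _ 1 (m+1)
  -- peel tops
  rw [Finset.sum_Icc_succ_top (show (1:ℕ) ≤ m+2 by omega)
      (fun i => pd2 (fun x' => Q x' z) i x),
    Finset.sum_Icc_succ_top (show (1:ℕ) ≤ m+3 by omega)
      (fun i => pd2 (fun z' => Q x z') i z),
    Finset.sum_Icc_succ_top (show (1:ℕ) ≤ m+2 by omega)
      (fun i => g (i+1) * Real.exp (z (i+1) - z i))]
  simp only [show m+2+1 = m+3 from rfl]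
  rw [hsplit1, Finset.sum_congr rfl hx, Finset.sum_congr rfl hz, hxtop, hz1, hztop,
    ← Finset.sum_mul, ← Finset.sum_mul]
  -- the telescoping identity
  have main2 : (∑ i ∈ Finset.Icc 1 (m+1),
        ((g (i+1) * Real.exp (z (i+1)) * Real.exp (-x i)
            - Real.exp (-z i) * Real.exp (x i)) ^ 2
          - Real.exp (-z i) * Real.exp (x i)
          - g (i+1) * Real.exp (z (i+1)) * Real.exp (-x i)))
      - (∑ i ∈ Finset.Icc 1 (m+1),
        ((Real.exp (x (i+1)) * Real.exp (-z (i+1))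
            - g (i+1) * Real.exp (-x i) * Real.exp (z (i+1))) ^ 2
          - g (i+1) * Real.exp (-x i) * Real.exp (z (i+1))
          - Real.exp (x (i+1)) * Real.exp (-z (i+1))))
      - 2 * (∑ i ∈ Finset.Icc 1 (m+1), g (i+1) * Real.exp (x (i+1) - x i))
      + 2 * (∑ i ∈ Finset.Icc 1 (m+1), g (i+1) * Real.exp (z (i+1) - z i))
      = (Real.exp (x 1 - z 1) ^ 2 - Real.exp (x 1 - z 1))
        - (Real.exp (x (m+2) - z (m+2)) ^ 2 - Real.exp (x (m+2) - z (m+2))) := by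
    rw [Finset.mul_sum, Finset.mul_sum, ← Finset.sum_sub_distrib, ← Finset.sum_sub_distrib,
      ← Finset.sum_add_distrib]
    have hper : ∀ i ∈ Finset.Icc 1 (m+1),
        (((g (i+1) * Real.exp (z (i+1)) * Real.exp (-x i)
            - Real.exp (-z i) * Real.exp (x i)) ^ 2
          - Real.exp (-z i) * Real.exp (x i)
          - g (i+1) * Real.exp (z (i+1)) * Real.exp (-x i))
        - ((Real.exp (x (i+1)) * Real.exp (-z (i+1))
            - g (i+1) * Real.exp (-x i) * Real.exp (z (i+1))) ^ 2
          - g (i+1) * Real.exp (-x i) * Real.exp (z (i+1))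
          - Real.exp (x (i+1)) * Real.exp (-z (i+1)))
        - 2 * (g (i+1) * Real.exp (x (i+1) - x i))
        + 2 * (g (i+1) * Real.exp (z (i+1) - z i)))
        = (fun i => Real.exp (x i - z i) ^ 2 - Real.exp (x i - z i)) i
          - (fun i => Real.exp (x i - z i) ^ 2 - Real.exp (x i - z i)) (i+1) := by
      intro i _
      simp only [tc_exp_sub, Real.exp_neg]
      field_simp
      ring
    rw [Finset.sum_congr rfl hper]
    exact tc_tele (fun i => Real.exp (x i - z i) ^ 2 - Real.exp (x i - z i)) m
  -- the boundary identity
  have bdry : -(1/2) * (((g (m+3) * Real.exp (z (m+3)) + g (m+4) * Real.exp (-z (m+3)))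
            * Real.exp (-x (m+2)) - Real.exp (-z (m+2)) * Real.exp (x (m+2))) ^ 2
          - Real.exp (-z (m+2)) * Real.exp (x (m+2))
          - (g (m+3) * Real.exp (z (m+3)) + g (m+4) * Real.exp (-z (m+3)))
              * Real.exp (-x (m+2)))
      + g 1 * Real.exp (x 1)
      + 2 * g (m+3) * g (m+4) * Real.exp (-2 * x (m+2))
      + (1/2) * ((Real.exp (x 1) * Real.exp (-z 1) - g 1 * Real.exp (z 1)) ^ 2
          - g 1 * Real.exp (z 1) - Real.exp (x 1) * Real.exp (-z 1))
      + (1/2) * ((g (m+4) * Real.exp (-x (m+2)) * Real.exp (-z (m+3))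
            - g (m+3) * Real.exp (-x (m+2)) * Real.exp (z (m+3))) ^ 2
          - g (m+3) * Real.exp (-x (m+2)) * Real.exp (z (m+3))
          - g (m+4) * Real.exp (-x (m+2)) * Real.exp (-z (m+3)))
      + (g 1 / 2) * Real.exp (z 1) - g 1 ^ 2 / 2 * Real.exp (2 * z 1)
      - g (m+3) * Real.exp (z (m+3) - z (m+2))
      - g (m+4) * Real.exp (-z (m+3) - z (m+2))
      - (1/2) * (((Real.exp (x 1 - z 1) ^ 2 - Real.exp (x 1 - z 1))
        - (Real.exp (x (m+2) - z (m+2)) ^ 2 - Real.exp (x (m+2) - z (m+2))))) = 0 := by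
    have e1 : Real.exp (2 * z 1) = Real.exp (z 1) * Real.exp (z 1) := by
      rw [← Real.exp_add]; ring_nf
    have e2 : Real.exp (-2 * x (m+2)) = Real.exp (-x (m+2)) * Real.exp (-x (m+2)) := by
      rw [← Real.exp_add]; ring_nf
    simp only [e1, e2, tc_exp_sub, Real.exp_neg]
    field_simp
    ring
  linear_combination (-(1/2) * Q x z) * main2 + (Q x z) * bdry
end

section
/- Let n ≥ 2 and g_1,…,g_{n+1} ∈ ℝ. Define Q : ℝ^n × ℝ^n → ℝ by Q(x,z) = exp(−g_1 e^{x_1+z_1} − Σ_{i=1}^{n−1}(e^{x_i − z_i} + g_{i+1} e^{z_{i+1} − x_i}) − e^{x_n − z_n} − g_{n+1} e^{−x_n − z_n}). Then pointwise: (−(1/2)Σ_{i=1}^n ∂²/∂x_i² + 2g_1 e^{2x_1} + Σ_{i=1}^{n−1} g_{i+1} e^{x_{i+1}−x_i} + g_n g_{n+1} e^{−x_n − x_{n−1}}) Q = (−(1/2)Σ_{i=1}^n ∂²/∂z_i² + g_1 g_2 e^{z_1+z_2} + Σ_{i=1}^{n−1} g_{i+1} e^{z_{i+1}−z_i} + 2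 g_{n+1} e^{−2z_n}) Q. -/
section Aux

open Finset

/-- The exponent of the kernel, with `n = m + 2`. -/
noncomputable def Fm (m : ℕ) (g x z : ℕ → ℝ) : ℝ :=
  -(g 1 * Real.exp (x 1 + z 1))
    - (∑ i ∈ Finset.Icc 1 (m + 1),
        (Real.exp (x i - z i) + g (i + 1) * Real.exp (z (i + 1) - x i)))
    - Real.exp (x (m + 2) - z (m + 2)) - g (m + 3) * Real.exp (-x (m + 2) - z (m + 2))

lemma hasDerivAt_inner (A B C t : ℝ) :
    HasDerivAt (fun s => A * Real.exp s + B * Real.exp (-s) + C)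
      (A * Real.exp t - B * Real.exp (-t)) t := by
  have h1 : HasDerivAt (fun s : ℝ => Real.exp (-s)) (-Real.exp (-t)) t := by
    simpa [Function.comp_def] using (Real.hasDerivAt_exp (-t)).comp t (hasDerivAt_neg t)
  have := (((Real.hasDerivAt_exp t).const_mul A).add (h1.const_mul B)).add_const C
  simpa [mul_neg, sub_eq_add_neg] using this

lemma hasDerivAt_inner' (A B C t : ℝ) :
    HasDerivAt (fun s => A * Real.exp s - B * Real.exp (-s) + C)
      (A * Real.exp t + B * Real.exp (-t)) t := by
  have := hasDerivAt_inner A (-B) C t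
  simpa [sub_eq_add_neg, neg_mul] using this

lemma deriv_exp_shape (A B C : ℝ) :
    deriv (fun s => Real.exp (A * Real.exp s + B * Real.exp (-s) + C))
      = fun t => (A * Real.exp t - B * Real.exp (-t))
          * Real.exp (A * Real.exp t + B * Real.exp (-t) + C) := by
  funext t
  rw [((hasDerivAt_inner A B C t).exp).deriv, mul_comm]

lemma pd2_exp_shape (f : (ℕ → ℝ) → ℝ) (i : ℕ) (p : ℕ → ℝ) (A B C : ℝ)
    (hf : ∀ t, f (Function.update p i t)
      = Real.exp (A * Real.exp t + B * Real.exp (-t) + C)) :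
    pd2 f i p = ((A * Real.exp (p i) + B * Real.exp (-(p i)))
        + (A * Real.exp (p i) - B * Real.exp (-(p i))) ^ 2)
      * Real.exp (A * Real.exp (p i) + B * Real.exp (-(p i)) + C) := by
  unfold pd2
  have h0 : (fun t => f (Function.update p i t))
      = fun t => Real.exp (A * Real.exp t + B * Real.exp (-t) + C) := funext hf
  rw [h0, deriv_exp_shape]
  set t := p i with ht
  have hmul : HasDerivAt (fun s : ℝ => A * Real.exp s - B * Real.exp (-s))
      (A * Real.exp t + B * Real.exp (-t)) t := by
    have h1 : HasDerivAt (fun s : ℝ => Real.exp (-s)) (-Real.exp (-t)) t := by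
      simpa [Function.comp_def] using (Real.hasDerivAt_exp (-t)).comp t (hasDerivAt_neg t)
    have := ((Real.hasDerivAt_exp t).const_mul A).sub (h1.const_mul B)
    exact this.congr_deriv (by ring)
  have h2 := hmul.mul ((hasDerivAt_inner A B C t).exp)
  exact h2.deriv.trans (by ring)

end Aux

section Aux2

open Finset

lemma exp_sub' (a b : ℝ) : Real.exp (a - b) = Real.exp a * (Real.exp b)⁻¹ := by
  rw [Real.exp_sub, div_eq_mul_inv]

lemma exp_neg' (a : ℝ) : Real.exp (-a) = (Real.exp a)⁻¹ := Real.exp_neg a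

lemma exp_two_mul' (a : ℝ) : Real.exp (2 * a) = Real.exp a * Real.exp a := by
  rw [two_mul, Real.exp_add]

lemma exp_neg_two_mul' (a : ℝ) : Real.exp (-2 * a) = (Real.exp a * Real.exp a)⁻¹ := by
  rw [show (-2 : ℝ) * a = -(2 * a) by ring, Real.exp_neg, exp_two_mul']

lemma sum_update (s : Finset ℕ) (f : ℕ → ℝ → ℝ) (x : ℕ → ℝ) (i : ℕ) (t : ℝ) (hi : i ∈ s) :
    ∑ j ∈ s, f j (Function.update x i t j)
      = (∑ j ∈ s, f j (x j)) + (f i t - f i (x i)) := by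
  rw [← Finset.sum_erase_add s _ hi, ← Finset.sum_erase_add s (fun j => f j (x j)) hi,
    Finset.sum_congr rfl
      (fun j hj => by rw [Function.update_of_ne (Finset.ne_of_mem_erase hj)]),
    Function.update_self]
  ring

lemma sum_update_notmem (s : Finset ℕ) (f : ℕ → ℝ → ℝ) (x : ℕ → ℝ) (i : ℕ) (t : ℝ)
    (hi : i ∉ s) :
    ∑ j ∈ s, f j (Function.update x i t j) = ∑ j ∈ s, f j (x j) :=
  Finset.sum_congr rfl (fun j hj => by
    rw [Function.update_of_ne (by rintro rfl; exact hi hj)])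

lemma sum_erase_one (s : Finset ℕ) (a : ℕ) (ha : a ∈ s) (f : ℕ → ℝ) :
    ∑ j ∈ s, f j = (∑ j ∈ s.erase a, f j) + f a :=
  (Finset.sum_erase_add s f ha).symm

lemma sum_erase_two (s : Finset ℕ) (a b : ℕ) (hb : b ∈ s) (ha : a ∈ s.erase b) (f : ℕ → ℝ) :
    ∑ j ∈ s, f j = (∑ j ∈ (s.erase b).erase a, f j) + f a + f b := by
  rw [← Finset.sum_erase_add s f hb, ← Finset.sum_erase_add (s.erase b) f ha]

lemma sum_split (m : ℕ) (f : ℕ → ℝ) :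
    ∑ i ∈ Finset.Icc 1 (m + 2), f i
      = f 1 + (∑ k ∈ Finset.Icc 1 m, f (k + 1)) + f (m + 2) := by
  have e1 : (Finset.Icc 1 (m + 2)).erase (m + 2) = Finset.Icc 1 (m + 1) := by
    ext a; simp only [Finset.mem_erase, Finset.mem_Icc]; omega
  have e2 : (Finset.Icc 1 (m + 1)).erase 1 = Finset.Icc 2 (m + 1) := by
    ext a; simp only [Finset.mem_erase, Finset.mem_Icc]; omega
  have e3 : Finset.Icc 2 (m + 1)
      = Finset.map ⟨fun k => k + 1, add_left_injective 1⟩ (Finset.Icc 1 m) := by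
    ext a
    simp only [Finset.mem_Icc, Finset.mem_map, Function.Embedding.coeFn_mk]
    constructor
    · rintro ⟨h1, h2⟩; exact ⟨a - 1, ⟨by omega, by omega⟩, by omega⟩
    · rintro ⟨b, ⟨hb1, hb2⟩, rfl⟩; omega
  rw [← Finset.sum_erase_add _ f (show m + 2 ∈ Finset.Icc 1 (m + 2) from by
        simp only [Finset.mem_Icc]; omega), e1,
      ← Finset.sum_erase_add _ f (show (1 : ℕ) ∈ Finset.Icc 1 (m + 1) from by
        simp only [Finset.mem_Icc]; omega), e2, e3, Finset.sum_map]
  simp only [Function.Embedding.coeFn_mk]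
  ring

lemma sum_top (m : ℕ) (f : ℕ → ℝ) :
    ∑ i ∈ Finset.Icc 1 (m + 1), f i = (∑ i ∈ Finset.Icc 1 m, f i) + f (m + 1) := by
  rw [← Finset.sum_erase_add _ f (show m + 1 ∈ Finset.Icc 1 (m + 1) from by
      simp only [Finset.mem_Icc]; omega),
    show (Finset.Icc 1 (m + 1)).erase (m + 1) = Finset.Icc 1 m from by
      ext a; simp only [Finset.mem_erase, Finset.mem_Icc]; omega]

lemma sum_telescope_Icc (f : ℕ → ℝ) (m : ℕ) :
    ∑ k ∈ Finset.Icc 1 m, (f (k + 1) - f k) = f (m + 1) - f 1 := by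
  induction m with
  | zero => simp
  | succ p ih =>
    rw [sum_top p (fun k => f (k + 1) - f k), ih]
    ring

lemma pd2_formula (f : (ℕ → ℝ) → ℝ) (i : ℕ) (p : ℕ → ℝ) (A B D : ℝ)
    (hD : ∀ t, f (Function.update p i t)
      = Real.exp (A * Real.exp t + B * Real.exp (-t)
          + (D - (A * Real.exp (p i) + B * Real.exp (-(p i)))))) :
    pd2 f i p = ((A * Real.exp (p i) + B * Real.exp (-(p i)))
        + (A * Real.exp (p i) - B * Real.exp (-(p i))) ^ 2) * Real.exp D := by
  rw [pd2_exp_shape f i p A B _ hD,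
    show A * Real.exp (p i) + B * Real.exp (-(p i))
        + (D - (A * Real.exp (p i) + B * Real.exp (-(p i)))) = D from by ring]

end Aux2


section Update

open Finset

lemma Fm_update_x1 (m : ℕ) (g x z : ℕ → ℝ) (t : ℝ) :
    Fm m g (Function.update x 1 t) z
      = -(Real.exp (-z 1) + g 1 * Real.exp (z 1)) * Real.exp t
        + -(g 2 * Real.exp (z 2)) * Real.exp (-t)
        + (Fm m g x z - (-(Real.exp (-z 1) + g 1 * Real.exp (z 1)) * Real.exp (x 1)
            + -(g 2 * Real.exp (z 2)) * Real.exp (-(x 1)))) := by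
  unfold Fm
  rw [sum_update (Finset.Icc 1 (m + 1))
      (fun j v => Real.exp (v - z j) + g (j + 1) * Real.exp (z (j + 1) - v)) x 1 t
      (by simp only [Finset.mem_Icc]; omega),
    Function.update_self, Function.update_of_ne (show m + 2 ≠ 1 by omega)]
  simp only [show (1 : ℕ) + 1 = 2 from rfl, sub_eq_add_neg, Real.exp_add, Real.exp_neg]
  ring

lemma Fm_update_xmid (m : ℕ) (g x z : ℕ → ℝ) (k : ℕ) (hk1 : 1 ≤ k) (hk2 : k ≤ m) (t : ℝ) :
    Fm m g (Function.update x (k + 1) t) z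
      = -Real.exp (-z (k + 1)) * Real.exp t
        + -(g (k + 2) * Real.exp (z (k + 2))) * Real.exp (-t)
        + (Fm m g x z - (-Real.exp (-z (k + 1)) * Real.exp (x (k + 1))
            + -(g (k + 2) * Real.exp (z (k + 2))) * Real.exp (-(x (k + 1))))) := by
  unfold Fm
  rw [sum_update (Finset.Icc 1 (m + 1))
      (fun j v => Real.exp (v - z j) + g (j + 1) * Real.exp (z (j + 1) - v)) x (k + 1) t
      (by simp only [Finset.mem_Icc]; omega),
    Function.update_of_ne (show (1 : ℕ) ≠ k + 1 by omega),
    Function.update_of_ne (show m + 2 ≠ k + 1 by omega)]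
  simp only [show k + 1 + 1 = k + 2 from rfl, sub_eq_add_neg, Real.exp_add, Real.exp_neg]
  ring

lemma Fm_update_xn (m : ℕ) (g x z : ℕ → ℝ) (t : ℝ) :
    Fm m g (Function.update x (m + 2) t) z
      = -Real.exp (-z (m + 2)) * Real.exp t
        + -(g (m + 3) * Real.exp (-z (m + 2))) * Real.exp (-t)
        + (Fm m g x z - (-Real.exp (-z (m + 2)) * Real.exp (x (m + 2))
            + -(g (m + 3) * Real.exp (-z (m + 2))) * Real.exp (-(x (m + 2))))) := by
  unfold Fm
  rw [sum_update_notmem (Finset.Icc 1 (m + 1))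
      (fun j v => Real.exp (v - z j) + g (j + 1) * Real.exp (z (j + 1) - v)) x (m + 2) t
      (by simp only [Finset.mem_Icc]; omega),
    Function.update_self, Function.update_of_ne (show (1 : ℕ) ≠ m + 2 by omega)]
  simp only [sub_eq_add_neg, Real.exp_add, Real.exp_neg, neg_add]
  ring

lemma Fm_update_z1 (m : ℕ) (g x z : ℕ → ℝ) (t : ℝ) :
    Fm m g x (Function.update z 1 t)
      = -(g 1 * Real.exp (x 1)) * Real.exp t + -Real.exp (x 1) * Real.exp (-t)
        + (Fm m g x z - (-(g 1 * Real.exp (x 1)) * Real.exp (z 1)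
            + -Real.exp (x 1) * Real.exp (-(z 1)))) := by
  unfold Fm
  have hm : (1 : ℕ) ∈ Finset.Icc 1 (m + 1) := by simp only [Finset.mem_Icc]; omega
  have hcg : ∀ j ∈ (Finset.Icc 1 (m + 1)).erase 1,
      Real.exp (x j - Function.update z 1 t j)
          + g (j + 1) * Real.exp (Function.update z 1 t (j + 1) - x j)
        = Real.exp (x j - z j) + g (j + 1) * Real.exp (z (j + 1) - x j) := by
    intro j hj
    have h1 : j ≠ 1 := Finset.ne_of_mem_erase hj
    have h2 : j ∈ Finset.Icc 1 (m + 1) := Finset.mem_of_mem_erase hj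
    simp only [Finset.mem_Icc] at h2
    rw [Function.update_of_ne h1, Function.update_of_ne (show j + 1 ≠ 1 by omega)]
  rw [sum_erase_one (Finset.Icc 1 (m + 1)) 1 hm
      (fun j => Real.exp (x j - Function.update z 1 t j)
        + g (j + 1) * Real.exp (Function.update z 1 t (j + 1) - x j)),
    sum_erase_one (Finset.Icc 1 (m + 1)) 1 hm
      (fun j => Real.exp (x j - z j) + g (j + 1) * Real.exp (z (j + 1) - x j)),
    Finset.sum_congr rfl hcg]
  simp only [show (1 : ℕ) + 1 = 2 from rfl, Function.update_self,
    Function.update_of_ne (show (2 : ℕ) ≠ 1 by omega),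
    Function.update_of_ne (show m + 2 ≠ 1 by omega),
    sub_eq_add_neg, Real.exp_add, Real.exp_neg]
  ring

lemma Fm_update_zmid (m : ℕ) (g x z : ℕ → ℝ) (k : ℕ) (hk1 : 1 ≤ k) (hk2 : k ≤ m) (t : ℝ) :
    Fm m g x (Function.update z (k + 1) t)
      = -(g (k + 1) * Real.exp (-x k)) * Real.exp t
        + -Real.exp (x (k + 1)) * Real.exp (-t)
        + (Fm m g x z - (-(g (k + 1) * Real.exp (-x k)) * Real.exp (z (k + 1))
            + -Real.exp (x (k + 1)) * Real.exp (-(z (k + 1))))) := by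
  unfold Fm
  have hb : k + 1 ∈ Finset.Icc 1 (m + 1) := by simp only [Finset.mem_Icc]; omega
  have ha : k ∈ (Finset.Icc 1 (m + 1)).erase (k + 1) := by
    simp only [Finset.mem_erase, Finset.mem_Icc]; omega
  have hcg : ∀ j ∈ ((Finset.Icc 1 (m + 1)).erase (k + 1)).erase k,
      Real.exp (x j - Function.update z (k + 1) t j)
          + g (j + 1) * Real.exp (Function.update z (k + 1) t (j + 1) - x j)
        = Real.exp (x j - z j) + g (j + 1) * Real.exp (z (j + 1) - x j) := by
    intro j hj
    have h1 : j ≠ k := (Finset.mem_erase.mp hj).1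
    have h2 : j ≠ k + 1 := (Finset.mem_erase.mp ((Finset.mem_erase.mp hj).2)).1
    rw [Function.update_of_ne h2, Function.update_of_ne (show j + 1 ≠ k + 1 by omega)]
  rw [sum_erase_two (Finset.Icc 1 (m + 1)) k (k + 1) hb ha
      (fun j => Real.exp (x j - Function.update z (k + 1) t j)
        + g (j + 1) * Real.exp (Function.update z (k + 1) t (j + 1) - x j)),
    sum_erase_two (Finset.Icc 1 (m + 1)) k (k + 1) hb ha
      (fun j => Real.exp (x j - z j) + g (j + 1) * Real.exp (z (j + 1) - x j)),
    Finset.sum_congr rfl hcg]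
  simp only [show k + 1 + 1 = k + 2 from rfl, Function.update_self,
    Function.update_of_ne (show k ≠ k + 1 by omega),
    Function.update_of_ne (show k + 2 ≠ k + 1 by omega),
    Function.update_of_ne (show (1 : ℕ) ≠ k + 1 by omega),
    Function.update_of_ne (show m + 2 ≠ k + 1 by omega),
    sub_eq_add_neg, Real.exp_add, Real.exp_neg]
  ring

lemma Fm_update_zn (m : ℕ) (g x z : ℕ → ℝ) (t : ℝ) :
    Fm m g x (Function.update z (m + 2) t)
      = -(g (m + 2) * Real.exp (-x (m + 1))) * Real.exp t
        + -(Real.exp (x (m + 2)) + g (m + 3) * Real.exp (-x (m + 2))) * Real.exp (-t)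
        + (Fm m g x z - (-(g (m + 2) * Real.exp (-x (m + 1))) * Real.exp (z (m + 2))
            + -(Real.exp (x (m + 2)) + g (m + 3) * Real.exp (-x (m + 2)))
              * Real.exp (-(z (m + 2))))) := by
  unfold Fm
  have hm : m + 1 ∈ Finset.Icc 1 (m + 1) := by simp only [Finset.mem_Icc]; omega
  have hcg : ∀ j ∈ (Finset.Icc 1 (m + 1)).erase (m + 1),
      Real.exp (x j - Function.update z (m + 2) t j)
          + g (j + 1) * Real.exp (Function.update z (m + 2) t (j + 1) - x j)
        = Real.exp (x j - z j) + g (j + 1) * Real.exp (z (j + 1) - x j) := by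
    intro j hj
    have h1 : j ≠ m + 1 := (Finset.mem_erase.mp hj).1
    have h2 : j ∈ Finset.Icc 1 (m + 1) := (Finset.mem_erase.mp hj).2
    simp only [Finset.mem_Icc] at h2
    rw [Function.update_of_ne (show j ≠ m + 2 by omega),
      Function.update_of_ne (show j + 1 ≠ m + 2 by omega)]
  rw [sum_erase_one (Finset.Icc 1 (m + 1)) (m + 1) hm
      (fun j => Real.exp (x j - Function.update z (m + 2) t j)
        + g (j + 1) * Real.exp (Function.update z (m + 2) t (j + 1) - x j)),
    sum_erase_one (Finset.Icc 1 (m + 1)) (m + 1) hm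
      (fun j => Real.exp (x j - z j) + g (j + 1) * Real.exp (z (j + 1) - x j)),
    Finset.sum_congr rfl hcg]
  simp only [show m + 1 + 1 = m + 2 from rfl, Function.update_self,
    Function.update_of_ne (show m + 1 ≠ m + 2 by omega),
    Function.update_of_ne (show (1 : ℕ) ≠ m + 2 by omega),
    sub_eq_add_neg, Real.exp_add, Real.exp_neg]
  ring

end Update

set_option maxHeartbeats 2000000 in
/-- The elementary kernel intertwining the two realizations of the twisted affine
`A_{2n−1}^{(2)}` Toda chain, pointwise. -/
theorem stmt_13 (n : ℕ) (hn : 2 ≤ n) (g : ℕ → ℝ) :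
    let Q : (ℕ → ℝ) → (ℕ → ℝ) → ℝ := fun x z =>
      Real.exp (-(g 1 * Real.exp (x 1 + z 1))
        - (∑ i ∈ Finset.Icc 1 (n - 1),
            (Real.exp (x i - z i) + g (i + 1) * Real.exp (z (i + 1) - x i)))
        - Real.exp (x n - z n) - g (n + 1) * Real.exp (-x n - z n))
    ∀ x z : ℕ → ℝ,
      -(1 / 2) * (∑ i ∈ Finset.Icc 1 n, pd2 (fun x' => Q x' z) i x)
          + (2 * g 1 * Real.exp (2 * x 1)
              + (∑ i ∈ Finset.Icc 1 (n - 1), g (i + 1) * Real.exp (x (i + 1) - x i))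
              + g n * g (n + 1) * Real.exp (-x n - x (n - 1))) * Q x z
        = -(1 / 2) * (∑ i ∈ Finset.Icc 1 n, pd2 (fun z' => Q x z') i z)
          + (g 1 * g 2 * Real.exp (z 1 + z 2)
              + (∑ i ∈ Finset.Icc 1 (n - 1), g (i + 1) * Real.exp (z (i + 1) - z i))
              + 2 * g (n + 1) * Real.exp (-2 * z n)) * Q x z := by
  intro Q x z
  obtain ⟨m, rfl⟩ : ∃ m, n = m + 2 := ⟨n - 2, by omega⟩
  have hQ : ∀ x' z', Q x' z' = Real.exp (Fm m g x' z') := fun x' z' => rfl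
  simp only [hQ, show m + 2 - 1 = m + 1 from rfl, show m + 2 + 1 = m + 3 from rfl]
  have hx1 := pd2_formula (fun x' => Real.exp (Fm m g x' z)) 1 x
    (-(Real.exp (-z 1) + g 1 * Real.exp (z 1))) (-(g 2 * Real.exp (z 2))) (Fm m g x z)
    (fun t => congrArg Real.exp (Fm_update_x1 m g x z t))
  have hxn := pd2_formula (fun x' => Real.exp (Fm m g x' z)) (m + 2) x
    (-Real.exp (-z (m + 2))) (-(g (m + 3) * Real.exp (-z (m + 2)))) (Fm m g x z)
    (fun t => congrArg Real.exp (Fm_update_xn m g x z t))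
  have hz1 := pd2_formula (fun z' => Real.exp (Fm m g x z')) 1 z
    (-(g 1 * Real.exp (x 1))) (-Real.exp (x 1)) (Fm m g x z)
    (fun t => congrArg Real.exp (Fm_update_z1 m g x z t))
  have hzn := pd2_formula (fun z' => Real.exp (Fm m g x z')) (m + 2) z
    (-(g (m + 2) * Real.exp (-x (m + 1))))
    (-(Real.exp (x (m + 2)) + g (m + 3) * Real.exp (-x (m + 2)))) (Fm m g x z)
    (fun t => congrArg Real.exp (Fm_update_zn m g x z t))
  have hxmid : ∀ k ∈ Finset.Icc 1 m,
      pd2 (fun x' => Real.exp (Fm m g x' z)) (k + 1) x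
        = ((-Real.exp (-z (k + 1)) * Real.exp (x (k + 1))
              + -(g (k + 2) * Real.exp (z (k + 2))) * Real.exp (-x (k + 1)))
            + (-Real.exp (-z (k + 1)) * Real.exp (x (k + 1))
              - -(g (k + 2) * Real.exp (z (k + 2))) * Real.exp (-x (k + 1))) ^ 2)
          * Real.exp (Fm m g x z) := by
    intro k hk
    simp only [Finset.mem_Icc] at hk
    exact pd2_formula (fun x' => Real.exp (Fm m g x' z)) (k + 1) x
      (-Real.exp (-z (k + 1))) (-(g (k + 2) * Real.exp (z (k + 2)))) (Fm m g x z)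
      (fun t => congrArg Real.exp (Fm_update_xmid m g x z k hk.1 hk.2 t))
  have hzmid : ∀ k ∈ Finset.Icc 1 m,
      pd2 (fun z' => Real.exp (Fm m g x z')) (k + 1) z
        = ((-(g (k + 1) * Real.exp (-x k)) * Real.exp (z (k + 1))
              + -Real.exp (x (k + 1)) * Real.exp (-z (k + 1)))
            + (-(g (k + 1) * Real.exp (-x k)) * Real.exp (z (k + 1))
              - -Real.exp (x (k + 1)) * Real.exp (-z (k + 1))) ^ 2)
          * Real.exp (Fm m g x z) := by
    intro k hk
    simp only [Finset.mem_Icc] at hk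
    exact pd2_formula (fun z' => Real.exp (Fm m g x z')) (k + 1) z
      (-(g (k + 1) * Real.exp (-x k))) (-Real.exp (x (k + 1))) (Fm m g x z)
      (fun t => congrArg Real.exp (Fm_update_zmid m g x z k hk.1 hk.2 t))
  rw [sum_split m (fun i => pd2 (fun x' => Real.exp (Fm m g x' z)) i x),
    sum_split m (fun i => pd2 (fun z' => Real.exp (Fm m g x z')) i z),
    sum_top m (fun i => g (i + 1) * Real.exp (x (i + 1) - x i)),
    sum_top m (fun i => g (i + 1) * Real.exp (z (i + 1) - z i)),
    hx1, hxn, hz1, hzn, Finset.sum_congr rfl hxmid, Finset.sum_congr rfl hzmid,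
    ← Finset.sum_mul, ← Finset.sum_mul]
  have hmid : ∀ k ∈ Finset.Icc 1 m,
      (-(1 / 2 : ℝ)) * ((-Real.exp (-z (k + 1)) * Real.exp (x (k + 1))
              + -(g (k + 2) * Real.exp (z (k + 2))) * Real.exp (-x (k + 1)))
            + (-Real.exp (-z (k + 1)) * Real.exp (x (k + 1))
              - -(g (k + 2) * Real.exp (z (k + 2))) * Real.exp (-x (k + 1))) ^ 2)
          + g (k + 1) * Real.exp (x (k + 1) - x k)
        - ((-(1 / 2 : ℝ)) * ((-(g (k + 1) * Real.exp (-x k)) * Real.exp (z (k + 1))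
              + -Real.exp (x (k + 1)) * Real.exp (-z (k + 1)))
            + (-(g (k + 1) * Real.exp (-x k)) * Real.exp (z (k + 1))
              - -Real.exp (x (k + 1)) * Real.exp (-z (k + 1))) ^ 2)
          + g (k + 1) * Real.exp (z (k + 1) - z k))
        = (fun j => (1 / 2 : ℝ) * (g (j + 1) * Real.exp (z (j + 1) - x j))
            - (1 / 2 : ℝ) * (g (j + 1) * Real.exp (z (j + 1) - x j)) ^ 2
            + g (j + 1) * Real.exp (z (j + 1) - z j)) (k + 1)
          - (fun j => (1 / 2 : ℝ) * (g (j + 1) * Real.exp (z (j + 1) - x j))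
            - (1 / 2 : ℝ) * (g (j + 1) * Real.exp (z (j + 1) - x j)) ^ 2
            + g (j + 1) * Real.exp (z (j + 1) - z j)) k := by
    intro k hk
    simp only [show k + 1 + 1 = k + 2 from rfl, exp_sub', Real.exp_add, exp_neg']
    field_simp
    ring
  set Sx := ∑ k ∈ Finset.Icc 1 m,
      ((-Real.exp (-z (k + 1)) * Real.exp (x (k + 1))
          + -(g (k + 2) * Real.exp (z (k + 2))) * Real.exp (-x (k + 1)))
        + (-Real.exp (-z (k + 1)) * Real.exp (x (k + 1))
          - -(g (k + 2) * Real.exp (z (k + 2))) * Real.exp (-x (k + 1))) ^ 2) with hSx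
  set Sz := ∑ k ∈ Finset.Icc 1 m,
      ((-(g (k + 1) * Real.exp (-x k)) * Real.exp (z (k + 1))
          + -Real.exp (x (k + 1)) * Real.exp (-z (k + 1)))
        + (-(g (k + 1) * Real.exp (-x k)) * Real.exp (z (k + 1))
          - -Real.exp (x (k + 1)) * Real.exp (-z (k + 1))) ^ 2) with hSz
  set Px := ∑ k ∈ Finset.Icc 1 m, g (k + 1) * Real.exp (x (k + 1) - x k) with hPx
  set Pz := ∑ k ∈ Finset.Icc 1 m, g (k + 1) * Real.exp (z (k + 1) - z k) with hPz
  have hcomb : -(1 / 2 : ℝ) * Sx + Px - (-(1 / 2 : ℝ) * Sz + Pz)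
      = (fun j => (1 / 2 : ℝ) * (g (j + 1) * Real.exp (z (j + 1) - x j))
            - (1 / 2 : ℝ) * (g (j + 1) * Real.exp (z (j + 1) - x j)) ^ 2
            + g (j + 1) * Real.exp (z (j + 1) - z j)) (m + 1)
          - (fun j => (1 / 2 : ℝ) * (g (j + 1) * Real.exp (z (j + 1) - x j))
            - (1 / 2 : ℝ) * (g (j + 1) * Real.exp (z (j + 1) - x j)) ^ 2
            + g (j + 1) * Real.exp (z (j + 1) - z j)) 1 := by
    rw [hSx, hSz, hPx, hPz, Finset.mul_sum, Finset.mul_sum, ← Finset.sum_add_distrib,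
      ← Finset.sum_add_distrib, ← Finset.sum_sub_distrib]
    exact (Finset.sum_congr rfl hmid).trans
      (sum_telescope_Icc (fun j => (1 / 2 : ℝ) * (g (j + 1) * Real.exp (z (j + 1) - x j))
        - (1 / 2 : ℝ) * (g (j + 1) * Real.exp (z (j + 1) - x j)) ^ 2
        + g (j + 1) * Real.exp (z (j + 1) - z j)) m)
  simp only [show (1 : ℕ) + 1 = 2 from rfl, show m + 1 + 1 = m + 2 from rfl, exp_sub',
    Real.exp_add, exp_neg', exp_two_mul', exp_neg_two_mul'] at hcomb ⊢
  linear_combination (norm := (field_simp; ring1)) Real.exp (Fm m g x z) * hcomb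
end

section
/- Let n ≥ 2 and g_1,…,g_{n+1} ∈ ℝ. Define Q : ℝ^n × ℝ^n → ℝ by Q(x,z) = exp(−g_1 e^{z_1} − Σ_{i=1}^{n−1}(e^{x_i − z_i} + g_{i+1} e^{z_{i+1} − x_i}) − e^{x_n − z_n} − g_{n+1} e^{−x_n − z_n}). Then pointwise: (−(1/2)Σ_{i=1}^n ∂²/∂x_i² + g_1 e^{x_1} + Σ_{i=1}^{n−1} g_{i+1} e^{x_{i+1}−x_i} + g_n g_{n+1} e^{−x_n − x_{n−1}}) Q = (−(1/2)Σ_{i=1}^n ∂²/∂z_i² − (g_1/2) e^{z_1} + (g_1²/2) e^{2z_1} + Σ_{i=1}^{n−1} g_{i+1} e^{z_{i+1}−z_i} + 2 g_{n+1} e^{−2z_n}) Q. -/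
open Real Finset

section helpers

lemma sum_split_bot (f : ℕ → ℝ) {a b : ℕ} (h : a ≤ b) :
    ∑ i ∈ Icc a b, f i = f a + ∑ i ∈ Icc (a+1) b, f i := by
  rw [show Icc a b = insert a (Icc (a+1) b) from by ext j; simp; omega,
    Finset.sum_insert (by simp)]

lemma sum_shift (f : ℕ → ℝ) (m : ℕ) :
    ∑ j ∈ Icc 2 (m+1), f j = ∑ i ∈ Icc 1 m, f (i+1) := by
  rw [show Icc 2 (m+1) = Finset.map ⟨fun i => i + 1, fun a b h => by simp only [] at h; omega⟩ (Icc 1 m) from by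
    ext j
    simp only [Finset.mem_map, Finset.mem_Icc, Function.Embedding.coeFn_mk]
    constructor
    · rintro ⟨h1, h2⟩; exact ⟨j - 1, ⟨by omega, by omega⟩, by show j - 1 + 1 = j; omega⟩
    · rintro ⟨i, ⟨h1, h2⟩, rfl⟩; exact ⟨by show 2 ≤ i + 1; omega, by show i + 1 ≤ m + 1; omega⟩,
    Finset.sum_map]
  rfl

lemma sum_bot1 (f : ℕ → ℝ) (m : ℕ) :
    ∑ i ∈ Icc 1 (m+1), f i = f 1 + ∑ i ∈ Icc 2 (m+1), f i :=
  sum_split_bot f (by omega)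

lemma sum_bot2 (f : ℕ → ℝ) (m : ℕ) :
    ∑ i ∈ Icc 1 (m+2), f i = f 1 + ∑ i ∈ Icc 2 (m+2), f i :=
  sum_split_bot f (by omega)

lemma sum_top1 (f : ℕ → ℝ) (m : ℕ) :
    ∑ i ∈ Icc 1 (m+1), f i = (∑ i ∈ Icc 1 m, f i) + f (m+1) :=
  Finset.sum_Icc_succ_top (by omega) f

lemma sum_top2' (f : ℕ → ℝ) (m : ℕ) :
    ∑ i ∈ Icc 2 (m+2), f i = (∑ i ∈ Icc 2 (m+1), f i) + f (m+2) :=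
  Finset.sum_Icc_succ_top (by omega) f

lemma sum_top2 (f : ℕ → ℝ) (a m : ℕ) (h : a ≤ m + 2) :
    ∑ i ∈ Icc a (m+2), f i = (∑ i ∈ Icc a (m+1), f i) + f (m+2) :=
  Finset.sum_Icc_succ_top h f

lemma sum_shift2 (f : ℕ → ℝ) (m : ℕ) :
    ∑ j ∈ Icc 2 (m+2), f j = ∑ i ∈ Icc 1 (m+1), f (i+1) :=
  sum_shift f (m+1)

lemma exp_two (u : ℝ) : Real.exp (2 * u) = Real.exp u ^ 2 := by
  rw [two_mul, Real.exp_add, sq]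

lemma exp_negtwo (u : ℝ) : Real.exp (-2 * u) = (Real.exp u ^ 2)⁻¹ := by
  rw [show (-2:ℝ) * u = -(2*u) by ring, Real.exp_neg, exp_two]

end helpers

noncomputable def Px (z : ℕ → ℝ) : ℕ → ℝ := fun i => Real.exp (-(z i))

noncomputable def Rx (n : ℕ) (g z : ℕ → ℝ) : ℕ → ℝ := fun i =>
  if i = n then g (n+1) * Real.exp (-(z n)) else g (i+1) * Real.exp (z (i+1))

noncomputable def Az (g x : ℕ → ℝ) : ℕ → ℝ := fun j =>
  if j = 1 then g 1 else g j * Real.exp (-(x (j-1)))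

noncomputable def Bz (n : ℕ) (g x : ℕ → ℝ) : ℕ → ℝ := fun j =>
  if j = n then Real.exp (x n) + g (n+1) * Real.exp (-(x n)) else Real.exp (x j)

lemma expo_x (m : ℕ) (g x z : ℕ → ℝ) :
    -(g 1 * Real.exp (z 1))
      - (∑ i ∈ Icc 1 (m+1), (Real.exp (x i - z i) + g (i+1) * Real.exp (z (i+1) - x i)))
      - Real.exp (x (m+2) - z (m+2)) - g (m+3) * Real.exp (-x (m+2) - z (m+2))
    = -(g 1 * Real.exp (z 1))
      - ∑ i ∈ Icc 1 (m+2), (Px z i * Real.exp (x i) + Rx (m+2) g z i * Real.exp (-(x i))) := by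
  have hpt : ∀ i ∈ Icc 1 (m+1),
      Px z i * Real.exp (x i) + Rx (m+2) g z i * Real.exp (-(x i))
        = Real.exp (x i - z i) + g (i+1) * Real.exp (z (i+1) - x i) := by
    intro i hi
    have hne : i ≠ m + 2 := by have := (Finset.mem_Icc.mp hi).2; omega
    simp only [Px, Rx, if_neg hne]
    simp only [Real.exp_sub, Real.exp_neg]
    field_simp
  have hend : Px z (m+2) * Real.exp (x (m+2)) + Rx (m+2) g z (m+2) * Real.exp (-(x (m+2)))
      = Real.exp (x (m+2) - z (m+2)) + g (m+3) * Real.exp (-x (m+2) - z (m+2)) := by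
    simp only [Px, Rx, if_pos rfl, ↓reduceIte]
    simp only [Real.exp_sub, Real.exp_neg]
    field_simp
  rw [sum_top2 _ 1 m (by omega), Finset.sum_congr rfl hpt, hend]
  ring

lemma expo_z (m : ℕ) (g x z : ℕ → ℝ) :
    -(g 1 * Real.exp (z 1))
      - (∑ i ∈ Icc 1 (m+1), (Real.exp (x i - z i) + g (i+1) * Real.exp (z (i+1) - x i)))
      - Real.exp (x (m+2) - z (m+2)) - g (m+3) * Real.exp (-x (m+2) - z (m+2))
    = 0 - ∑ j ∈ Icc 1 (m+2), (Az g x j * Real.exp (z j) + Bz (m+2) g x j * Real.exp (-(z j))) := by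
  have hpt : ∀ j ∈ Icc 2 (m+1),
      Az g x j * Real.exp (z j) + Bz (m+2) g x j * Real.exp (-(z j))
        = Real.exp (x j - z j) + g j * Real.exp (z j - x (j-1)) := by
    intro j hj
    have h1 : j ≠ 1 := by have := (Finset.mem_Icc.mp hj).1; omega
    have h2 : j ≠ m + 2 := by have := (Finset.mem_Icc.mp hj).2; omega
    simp only [Az, Bz, if_neg h1, if_neg h2]
    simp only [Real.exp_sub, Real.exp_neg]
    field_simp
    ring
  have h1 : Az g x 1 * Real.exp (z 1) + Bz (m+2) g x 1 * Real.exp (-(z 1))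
      = g 1 * Real.exp (z 1) + Real.exp (x 1 - z 1) := by
    have hne : (1:ℕ) ≠ m + 2 := by omega
    simp only [Az, Bz, if_pos rfl, ↓reduceIte, if_neg hne]
    simp only [Real.exp_sub, Real.exp_neg]
    field_simp
  have hend : Az g x (m+2) * Real.exp (z (m+2)) + Bz (m+2) g x (m+2) * Real.exp (-(z (m+2)))
      = Real.exp (x (m+2) - z (m+2)) + g (m+3) * Real.exp (-x (m+2) - z (m+2))
          + g (m+2) * Real.exp (z (m+2) - x (m+1)) := by
    have hne : m + 2 ≠ 1 := by omega
    simp only [Az, Bz, if_pos rfl, ↓reduceIte, if_neg hne, show m + 2 - 1 = m + 1 from rfl]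
    simp only [Real.exp_sub, Real.exp_neg]
    field_simp
    ring
  rw [sum_top2 (fun j => Az g x j * Real.exp (z j) + Bz (m+2) g x j * Real.exp (-(z j))) 1 m (by omega),
    sum_bot1 (fun j => Az g x j * Real.exp (z j) + Bz (m+2) g x j * Real.exp (-(z j))) m,
    Finset.sum_congr rfl hpt, hend, h1,
    Finset.sum_add_distrib, Finset.sum_add_distrib, sum_bot1 (fun i => Real.exp (x i - z i)) m,
    sum_top1 (fun i => g (i+1) * Real.exp (z (i+1) - x i)) m,
    sum_shift (fun j => g j * Real.exp (z j - x (j-1))) m]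
  simp only [Nat.add_sub_cancel]
  ring

lemma hX_lemma (m : ℕ) (g x z : ℕ → ℝ) :
    ∑ i ∈ Icc 1 (m+2),
        ((Rx (m+2) g z i * Real.exp (-(x i)) - Px z i * Real.exp (x i)) ^ 2
          - (Px z i * Real.exp (x i) + Rx (m+2) g z i * Real.exp (-(x i))))
    = (∑ i ∈ Icc 1 (m+2), (Real.exp (x i - z i) ^ 2 - Real.exp (x i - z i)))
      + (∑ i ∈ Icc 1 (m+1),
          (g (i+1) ^ 2 * Real.exp (z (i+1) - x i) ^ 2 - g (i+1) * Real.exp (z (i+1) - x i)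
            - 2 * (g (i+1) * Real.exp (z (i+1) - z i))))
      + (g (m+3) ^ 2 * Real.exp (-x (m+2) - z (m+2)) ^ 2
          - g (m+3) * Real.exp (-x (m+2) - z (m+2))
          - 2 * (g (m+3) * Real.exp (-2 * z (m+2)))) := by
  have hpt : ∀ i ∈ Icc 1 (m+1),
      (Rx (m+2) g z i * Real.exp (-(x i)) - Px z i * Real.exp (x i)) ^ 2
          - (Px z i * Real.exp (x i) + Rx (m+2) g z i * Real.exp (-(x i)))
        = (Real.exp (x i - z i) ^ 2 - Real.exp (x i - z i))
          + (g (i+1) ^ 2 * Real.exp (z (i+1) - x i) ^ 2 - g (i+1) * Real.exp (z (i+1) - x i)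
            - 2 * (g (i+1) * Real.exp (z (i+1) - z i))) := by
    intro i hi
    have hne : i ≠ m + 2 := by have := (Finset.mem_Icc.mp hi).2; omega
    simp only [Px, Rx, if_neg hne]
    simp only [Real.exp_sub, Real.exp_neg]
    field_simp
    ring
  have hend : (Rx (m+2) g z (m+2) * Real.exp (-(x (m+2))) - Px z (m+2) * Real.exp (x (m+2))) ^ 2
          - (Px z (m+2) * Real.exp (x (m+2)) + Rx (m+2) g z (m+2) * Real.exp (-(x (m+2))))
        = (Real.exp (x (m+2) - z (m+2)) ^ 2 - Real.exp (x (m+2) - z (m+2)))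
          + (g (m+3) ^ 2 * Real.exp (-x (m+2) - z (m+2)) ^ 2
              - g (m+3) * Real.exp (-x (m+2) - z (m+2))
              - 2 * (g (m+3) * Real.exp (-2 * z (m+2)))) := by
    simp only [Px, Rx, if_pos rfl, ↓reduceIte]
    simp only [Real.exp_sub, Real.exp_neg, exp_negtwo]
    field_simp
    ring
  rw [sum_top2 (fun i => (Rx (m+2) g z i * Real.exp (-(x i)) - Px z i * Real.exp (x i)) ^ 2
          - (Px z i * Real.exp (x i) + Rx (m+2) g z i * Real.exp (-(x i)))) 1 m (by omega),
    sum_top2 (fun i => Real.exp (x i - z i) ^ 2 - Real.exp (x i - z i)) 1 m (by omega),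
    Finset.sum_congr rfl hpt, hend, Finset.sum_add_distrib]
  ring

lemma hZ_lemma (m : ℕ) (g x z : ℕ → ℝ) :
    ∑ j ∈ Icc 1 (m+2),
        ((Bz (m+2) g x j * Real.exp (-(z j)) - Az g x j * Real.exp (z j)) ^ 2
          - (Az g x j * Real.exp (z j) + Bz (m+2) g x j * Real.exp (-(z j))))
    = (∑ i ∈ Icc 1 (m+2), (Real.exp (x i - z i) ^ 2 - Real.exp (x i - z i)))
      + (∑ j ∈ Icc 2 (m+2),
          (g j ^ 2 * Real.exp (z j - x (j-1)) ^ 2 - g j * Real.exp (z j - x (j-1))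
            - 2 * (g j * Real.exp (x j - x (j-1)))))
      + (g 1 ^ 2 * Real.exp (2 * z 1) - 2 * (g 1 * Real.exp (x 1)) - g 1 * Real.exp (z 1))
      + (2 * (g (m+3) * Real.exp (-2 * z (m+2)))
          + g (m+3) ^ 2 * Real.exp (-x (m+2) - z (m+2)) ^ 2
          - 2 * (g (m+2) * g (m+3) * Real.exp (-x (m+2) - x (m+1)))
          - g (m+3) * Real.exp (-x (m+2) - z (m+2))) := by
  have hpt : ∀ j ∈ Icc 2 (m+1),
      (Bz (m+2) g x j * Real.exp (-(z j)) - Az g x j * Real.exp (z j)) ^ 2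
          - (Az g x j * Real.exp (z j) + Bz (m+2) g x j * Real.exp (-(z j)))
        = (Real.exp (x j - z j) ^ 2 - Real.exp (x j - z j))
          + (g j ^ 2 * Real.exp (z j - x (j-1)) ^ 2 - g j * Real.exp (z j - x (j-1))
            - 2 * (g j * Real.exp (x j - x (j-1)))) := by
    intro j hj
    have h1 : j ≠ 1 := by have := (Finset.mem_Icc.mp hj).1; omega
    have h2 : j ≠ m + 2 := by have := (Finset.mem_Icc.mp hj).2; omega
    simp only [Az, Bz, if_neg h1, if_neg h2]
    simp only [Real.exp_sub, Real.exp_neg]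
    field_simp
    ring
  have h1 : (Bz (m+2) g x 1 * Real.exp (-(z 1)) - Az g x 1 * Real.exp (z 1)) ^ 2
          - (Az g x 1 * Real.exp (z 1) + Bz (m+2) g x 1 * Real.exp (-(z 1)))
        = (Real.exp (x 1 - z 1) ^ 2 - Real.exp (x 1 - z 1))
          + (g 1 ^ 2 * Real.exp (2 * z 1) - 2 * (g 1 * Real.exp (x 1)) - g 1 * Real.exp (z 1)) := by
    have hne : (1:ℕ) ≠ m + 2 := by omega
    simp only [Az, Bz, if_pos rfl, ↓reduceIte, if_neg hne]
    simp only [Real.exp_sub, Real.exp_neg, exp_two]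
    field_simp
    ring
  have hend : (Bz (m+2) g x (m+2) * Real.exp (-(z (m+2))) - Az g x (m+2) * Real.exp (z (m+2))) ^ 2
          - (Az g x (m+2) * Real.exp (z (m+2)) + Bz (m+2) g x (m+2) * Real.exp (-(z (m+2))))
        = (Real.exp (x (m+2) - z (m+2)) ^ 2 - Real.exp (x (m+2) - z (m+2)))
          + (g (m+2) ^ 2 * Real.exp (z (m+2) - x (m+2-1)) ^ 2
              - g (m+2) * Real.exp (z (m+2) - x (m+2-1))
              - 2 * (g (m+2) * Real.exp (x (m+2) - x (m+2-1))))
          + (2 * (g (m+3) * Real.exp (-2 * z (m+2)))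
              + g (m+3) ^ 2 * Real.exp (-x (m+2) - z (m+2)) ^ 2
              - 2 * (g (m+2) * g (m+3) * Real.exp (-x (m+2) - x (m+1)))
              - g (m+3) * Real.exp (-x (m+2) - z (m+2))) := by
    have hne : m + 2 ≠ 1 := by omega
    simp only [Az, Bz, if_pos rfl, ↓reduceIte, if_neg hne, show m + 2 - 1 = m + 1 from rfl]
    simp only [Real.exp_sub, Real.exp_neg, exp_negtwo]
    field_simp
    ring
  rw [sum_top2 (fun j => (Bz (m+2) g x j * Real.exp (-(z j)) - Az g x j * Real.exp (z j)) ^ 2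
          - (Az g x j * Real.exp (z j) + Bz (m+2) g x j * Real.exp (-(z j)))) 1 m (by omega),
    sum_bot1 (fun j => (Bz (m+2) g x j * Real.exp (-(z j)) - Az g x j * Real.exp (z j)) ^ 2
          - (Az g x j * Real.exp (z j) + Bz (m+2) g x j * Real.exp (-(z j)))) m,
    Finset.sum_congr rfl hpt, hend, h1,
    sum_top2 (fun i => Real.exp (x i - z i) ^ 2 - Real.exp (x i - z i)) 1 m (by omega),
    sum_bot1 (fun i => Real.exp (x i - z i) ^ 2 - Real.exp (x i - z i)) m,
    sum_top2' (fun j => g j ^ 2 * Real.exp (z j - x (j-1)) ^ 2 - g j * Real.exp (z j - x (j-1))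
            - 2 * (g j * Real.exp (x j - x (j-1)))) m,
    Finset.sum_add_distrib]
  ring

lemma core (m : ℕ) (g x z : ℕ → ℝ) :
    -(1/2 : ℝ) * (∑ i ∈ Icc 1 (m+2),
        ((Rx (m+2) g z i * Real.exp (-(x i)) - Px z i * Real.exp (x i)) ^ 2
          - (Px z i * Real.exp (x i) + Rx (m+2) g z i * Real.exp (-(x i)))))
      + (g 1 * Real.exp (x 1)
          + (∑ i ∈ Icc 1 (m+1), g (i+1) * Real.exp (x (i+1) - x i))
          + g (m+2) * g (m+3) * Real.exp (-x (m+2) - x (m+1)))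
    = -(1/2 : ℝ) * (∑ j ∈ Icc 1 (m+2),
        ((Bz (m+2) g x j * Real.exp (-(z j)) - Az g x j * Real.exp (z j)) ^ 2
          - (Az g x j * Real.exp (z j) + Bz (m+2) g x j * Real.exp (-(z j)))))
      + (-(g 1 / 2) * Real.exp (z 1) + g 1 ^ 2 / 2 * Real.exp (2 * z 1)
          + (∑ i ∈ Icc 1 (m+1), g (i+1) * Real.exp (z (i+1) - z i))
          + 2 * (g (m+3) * Real.exp (-2 * z (m+2)))) := by
  rw [hX_lemma, hZ_lemma,
    sum_shift2 (fun j => g j ^ 2 * Real.exp (z j - x (j-1)) ^ 2 - g j * Real.exp (z j - x (j-1))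
            - 2 * (g j * Real.exp (x j - x (j-1)))) m]
  simp only [Nat.add_sub_cancel]
  have e1 : ∀ (F G : ℕ → ℝ), (∑ i ∈ Icc 1 (m+1), (F i - 2 * G i))
      = (∑ i ∈ Icc 1 (m+1), F i) - 2 * ∑ i ∈ Icc 1 (m+1), G i := by
    intro F G
    rw [Finset.sum_sub_distrib, Finset.mul_sum]
  rw [e1 (fun i => g (i+1) ^ 2 * Real.exp (z (i+1) - x i) ^ 2 - g (i+1) * Real.exp (z (i+1) - x i))
        (fun i => g (i+1) * Real.exp (z (i+1) - z i)),
      e1 (fun i => g (i+1) ^ 2 * Real.exp (z (i+1) - x i) ^ 2 - g (i+1) * Real.exp (z (i+1) - x i))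
        (fun i => g (i+1) * Real.exp (x (i+1) - x i))]
  ring

lemma deriv2_exp (C a b : ℝ) (u : ℝ) :
    deriv (deriv (fun t => Real.exp (C - (a * Real.exp t + b * Real.exp (-t))))) u
      = ((b * Real.exp (-u) - a * Real.exp u) ^ 2
          - (a * Real.exp u + b * Real.exp (-u)))
        * Real.exp (C - (a * Real.exp u + b * Real.exp (-u))) := by
  have hexpneg : ∀ t : ℝ, HasDerivAt (fun t : ℝ => Real.exp (-t)) (-Real.exp (-t)) t := by
    intro t
    simpa [Function.comp_def] using (Real.hasDerivAt_exp (-t)).comp t (hasDerivAt_neg t)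
  have hinner : ∀ t : ℝ, HasDerivAt (fun t => C - (a * Real.exp t + b * Real.exp (-t)))
      (b * Real.exp (-t) - a * Real.exp t) t := by
    intro t
    have h2 : HasDerivAt (fun t : ℝ => a * Real.exp t + b * Real.exp (-t))
        (a * Real.exp t + b * -Real.exp (-t)) t :=
      ((Real.hasDerivAt_exp t).const_mul a).add ((hexpneg t).const_mul b)
    have h3 := h2.const_sub C
    rw [show b * Real.exp (-t) - a * Real.exp t
        = -(a * Real.exp t + b * -Real.exp (-t)) by ring]
    exact h3
  have houter : ∀ t : ℝ, HasDerivAt (fun t => Real.exp (C - (a * Real.exp t + b * Real.exp (-t))))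
      ((b * Real.exp (-t) - a * Real.exp t)
        * Real.exp (C - (a * Real.exp t + b * Real.exp (-t)))) t := by
    intro t
    simpa [mul_comm] using (hinner t).exp
  have hderiv1 : deriv (fun t => Real.exp (C - (a * Real.exp t + b * Real.exp (-t))))
      = fun t => (b * Real.exp (-t) - a * Real.exp t)
          * Real.exp (C - (a * Real.exp t + b * Real.exp (-t))) :=
    funext fun t => (houter t).deriv
  rw [hderiv1]
  have h5 : HasDerivAt (fun t : ℝ => b * Real.exp (-t) - a * Real.exp t)
      (b * -Real.exp (-u) - a * Real.exp u) u :=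
    ((hexpneg u).const_mul b).sub ((Real.hasDerivAt_exp u).const_mul a)
  have h6 := (h5.mul (houter u)).deriv
  simp only [Pi.mul_def] at h6
  rw [h6]; ring

lemma pd2_exp_sum (s : Finset ℕ) (A B : ℕ → ℝ) (c : ℝ) {i : ℕ} (hi : i ∈ s) (p : ℕ → ℝ) :
    pd2 (fun q => Real.exp (c - ∑ j ∈ s, (A j * Real.exp (q j) + B j * Real.exp (-(q j))))) i p
      = ((B i * Real.exp (-(p i)) - A i * Real.exp (p i)) ^ 2
          - (A i * Real.exp (p i) + B i * Real.exp (-(p i))))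
        * Real.exp (c - ∑ j ∈ s, (A j * Real.exp (p j) + B j * Real.exp (-(p j)))) := by
  have hsplit : ∀ t : ℝ,
      c - ∑ j ∈ s, (A j * Real.exp (Function.update p i t j)
            + B j * Real.exp (-(Function.update p i t j)))
      = (c - ∑ j ∈ s.erase i, (A j * Real.exp (p j) + B j * Real.exp (-(p j))))
          - (A i * Real.exp t + B i * Real.exp (-t)) := by
    intro t
    rw [← Finset.add_sum_erase s _ hi, Function.update_self]
    rw [Finset.sum_congr rfl (fun j hj => by
      rw [Function.update_of_ne (Finset.ne_of_mem_erase hj)])]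
    ring
  unfold pd2
  have h1 : (fun t => (fun q => Real.exp
        (c - ∑ j ∈ s, (A j * Real.exp (q j) + B j * Real.exp (-(q j))))) (Function.update p i t))
      = fun t => Real.exp
          ((c - ∑ j ∈ s.erase i, (A j * Real.exp (p j) + B j * Real.exp (-(p j))))
            - (A i * Real.exp t + B i * Real.exp (-t))) :=
    funext fun t => by simp only []; rw [hsplit t]
  rw [h1, deriv2_exp]
  have h2 := hsplit (p i)
  rw [Function.update_eq_self] at h2
  rw [← h2]

/-- The elementary kernel intertwining the affine `B_n^{(1)}` Toda chain with the affine
non-reduced `BC''_n` Toda chain, pointwise. -/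
theorem stmt_14 (n : ℕ) (hn : 2 ≤ n) (g : ℕ → ℝ) :
    let Q : (ℕ → ℝ) → (ℕ → ℝ) → ℝ := fun x z =>
      Real.exp (-(g 1 * Real.exp (z 1))
        - (∑ i ∈ Finset.Icc 1 (n - 1),
            (Real.exp (x i - z i) + g (i + 1) * Real.exp (z (i + 1) - x i)))
        - Real.exp (x n - z n) - g (n + 1) * Real.exp (-x n - z n))
    ∀ x z : ℕ → ℝ,
      -(1 / 2) * (∑ i ∈ Finset.Icc 1 n, pd2 (fun x' => Q x' z) i x)
          + (g 1 * Real.exp (x 1)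
              + (∑ i ∈ Finset.Icc 1 (n - 1), g (i + 1) * Real.exp (x (i + 1) - x i))
              + g n * g (n + 1) * Real.exp (-x n - x (n - 1))) * Q x z
        = -(1 / 2) * (∑ i ∈ Finset.Icc 1 n, pd2 (fun z' => Q x z') i z)
          + (-(g 1 / 2) * Real.exp (z 1) + g 1 ^ 2 / 2 * Real.exp (2 * z 1)
              + (∑ i ∈ Finset.Icc 1 (n - 1), g (i + 1) * Real.exp (z (i + 1) - z i))
              + 2 * g (n + 1) * Real.exp (-2 * z n)) * Q x z := by
  obtain ⟨m, rfl⟩ : ∃ m, n = m + 2 := ⟨n - 2, by omega⟩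
  intro Q x z
  simp only [show m + 2 - 1 = m + 1 from rfl, show m + 2 + 1 = m + 3 from rfl]
  have hQx : ∀ x' : ℕ → ℝ, Q x' z
      = Real.exp (-(g 1 * Real.exp (z 1))
          - ∑ i ∈ Icc 1 (m+2), (Px z i * Real.exp (x' i) + Rx (m+2) g z i * Real.exp (-(x' i)))) := by
    intro x'
    show Real.exp _ = _
    exact congrArg Real.exp (expo_x m g x' z)
  have hQz : ∀ z' : ℕ → ℝ, Q x z'
      = Real.exp ((0:ℝ)
          - ∑ j ∈ Icc 1 (m+2), (Az g x j * Real.exp (z' j) + Bz (m+2) g x j * Real.exp (-(z' j)))) := by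
    intro z'
    show Real.exp _ = _
    exact congrArg Real.exp (expo_z m g x z')
  have hpd2x : ∀ i ∈ Icc 1 (m+2), pd2 (fun x' => Q x' z) i x
      = ((Rx (m+2) g z i * Real.exp (-(x i)) - Px z i * Real.exp (x i)) ^ 2
          - (Px z i * Real.exp (x i) + Rx (m+2) g z i * Real.exp (-(x i)))) * Q x z := by
    intro i hi
    have hfun : (fun x' => Q x' z) = fun q => Real.exp (-(g 1 * Real.exp (z 1))
        - ∑ j ∈ Icc 1 (m+2), (Px z j * Real.exp (q j) + Rx (m+2) g z j * Real.exp (-(q j)))) :=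
      funext hQx
    rw [hfun, pd2_exp_sum _ _ _ _ hi, ← hQx x]
  have hpd2z : ∀ j ∈ Icc 1 (m+2), pd2 (fun z' => Q x z') j z
      = ((Bz (m+2) g x j * Real.exp (-(z j)) - Az g x j * Real.exp (z j)) ^ 2
          - (Az g x j * Real.exp (z j) + Bz (m+2) g x j * Real.exp (-(z j)))) * Q x z := by
    intro j hj
    have hfun : (fun z' => Q x z') = fun q => Real.exp ((0:ℝ)
        - ∑ j ∈ Icc 1 (m+2), (Az g x j * Real.exp (q j) + Bz (m+2) g x j * Real.exp (-(q j)))) :=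
      funext hQz
    rw [hfun, pd2_exp_sum _ _ _ _ hj, ← hQz z]
  rw [Finset.sum_congr rfl hpd2x, Finset.sum_congr rfl hpd2z, ← Finset.sum_mul, ← Finset.sum_mul]
  linear_combination (Q x z) * core m g x z
end
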